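/- arXiv:1512.09258 — 5 statements merged into one kernel-verified Lean document; each statement's English description precedes it below -/
import Mathlib

section
/- Sylvester–Jacobi–Gundelfinger–Frobenius theorem: for a regular real symmetric n×n matrix S (all principal leading minors μ_k(S) nonzero, with μ_0 = 1), the signature of S equals the sum over k = 1,…,n of sign(μ_k(S)/μ_{k−1}(S)), which equals n − 2·var(μ_0, μ_1, …, μ_n), the number of sign changes in the minor sequence. -/
open Matrix
open Finset

/-- The signature of a real symmetric (hermitian) matrix: number of positive eigenvalues
minus number of negative eigenvalues. -/
noncomputable def matrixSignature {ι : Type} [Fintype ι] [DecidableEq ι]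
    (S : Matrix ι ι ℝ) : ℤ :=
  if h : S.IsHermitian then
    ((Finset.univ.filter fun i => 0 < h.eigenvalues i).card : ℤ)
      - ((Finset.univ.filter fun i => h.eigenvalues i < 0).card : ℤ)
  else 0

/-- The `k`-th leading principal minor of an `n × n` matrix (for `k ≤ n`), with the
convention that the `0`-th minor is `1`. -/
noncomputable def leadingMinor {n : ℕ} (S : Matrix (Fin n) (Fin n) ℝ) (k : ℕ) : ℝ :=
  Matrix.det (Matrix.of fun i j : Fin k =>
    if h : (i : ℕ) < n ∧ (j : ℕ) < n then S ⟨i, h.1⟩ ⟨j, h.2⟩ else 0)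


/-- extension by zero from a subtype, as a linear map -/
noncomputable def extZero {ι : Type*} (p : ι → Prop) [DecidablePred p] :
    ({i // p i} → ℝ) →ₗ[ℝ] (ι → ℝ) where
  toFun x i := if h : p i then x ⟨i, h⟩ else 0
  map_add' x y := by funext i; by_cases h : p i <;> simp [h]
  map_smul' c x := by funext i; by_cases h : p i <;> simp [h]

lemma inertia_le {n : ℕ} (d₁ d₂ : Fin n → ℝ) (B : Matrix (Fin n) (Fin n) ℝ)
    (h : diagonal d₂ = Bᵀ * diagonal d₁ * B) :
    (univ.filter fun i => 0 < d₂ i).card ≤ (univ.filter fun i => 0 < d₁ i).card := by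
  by_contra hlt
  push_neg at hlt
  classical
  set E : ({i // 0 < d₂ i} → ℝ) →ₗ[ℝ] (Fin n → ℝ) := extZero _
  set L : ({i // 0 < d₂ i} → ℝ) →ₗ[ℝ] ({i // 0 < d₁ i} → ℝ) :=
    (LinearMap.funLeft ℝ ℝ Subtype.val).comp ((Matrix.mulVecLin B).comp E) with hL
  have hni : ¬ Function.Injective L := by
    intro hinj
    have := LinearMap.finrank_le_finrank_of_injective hinj
    simp only [Module.finrank_pi, Fintype.card_subtype] at this
    omega
  rw [← LinearMap.ker_eq_bot] at hni
  obtain ⟨z, hz, hz0⟩ := Submodule.exists_mem_ne_zero_of_ne_bot hni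
  set y : Fin n → ℝ := E z with hy
  have hyv : ∀ i, y i = if h : 0 < d₂ i then z ⟨i, h⟩ else 0 := fun i => rfl
  have hBy : ∀ i (h : 0 < d₁ i), (B *ᵥ y) i = 0 := by
    intro i hi
    have : L z = 0 := hz
    have := congrFun this ⟨i, hi⟩
    simpa [hL, LinearMap.funLeft] using this
  -- LHS positive
  have hqual : y ⬝ᵥ (diagonal d₂ *ᵥ y) = (B *ᵥ y) ⬝ᵥ (diagonal d₁ *ᵥ (B *ᵥ y)) := by
    rw [h]
    rw [← mulVec_mulVec, ← mulVec_mulVec, Matrix.dotProduct_mulVec, vecMul_transpose]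
  have hpos : 0 < y ⬝ᵥ (diagonal d₂ *ᵥ y) := by
    have hform : y ⬝ᵥ (diagonal d₂ *ᵥ y) = ∑ i, d₂ i * y i ^ 2 := by
      simp [dotProduct, mulVec_diagonal]; exact Finset.sum_congr rfl fun i _ => by ring
    rw [hform]
    obtain ⟨j, hj⟩ : ∃ j, z j ≠ 0 := by
      by_contra hc; push_neg at hc; exact hz0 (funext hc)
    apply Finset.sum_pos' ?_ ⟨j.1, Finset.mem_univ _, ?_⟩
    · intro i _
      by_cases hi : 0 < d₂ i
      · positivity
      · simp [hyv i, hi]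
    · have : y j.1 = z j := by simp [hyv, j.2]
      rw [this]
      have := j.2
      positivity
  have hneg : (B *ᵥ y) ⬝ᵥ (diagonal d₁ *ᵥ (B *ᵥ y)) ≤ 0 := by
    have hform : (B *ᵥ y) ⬝ᵥ (diagonal d₁ *ᵥ (B *ᵥ y)) = ∑ i, d₁ i * (B *ᵥ y) i ^ 2 := by
      simp [dotProduct, mulVec_diagonal]; exact Finset.sum_congr rfl fun i _ => by ring
    rw [hform]
    apply Finset.sum_nonpos
    intro i _
    by_cases hi : 0 < d₁ i
    · simp [hBy i hi]
    · push_neg at hi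
      have : (B *ᵥ y) i ^ 2 ≥ 0 := sq_nonneg _
      nlinarith
  rw [hqual] at hpos
  linarith

lemma congr_rev {n : ℕ} (M N B : Matrix (Fin n) (Fin n) ℝ) (hB : IsUnit B.det)
    (h : M = Bᵀ * N * B) : N = (B⁻¹)ᵀ * M * B⁻¹ := by
  rw [h]
  rw [transpose_nonsing_inv]
  have h1 : Bᵀ⁻¹ * (Bᵀ * N * B) * B⁻¹ = (Bᵀ⁻¹ * Bᵀ) * N * (B * B⁻¹) := by
    noncomm_ring
  rw [h1, Matrix.nonsing_inv_mul _ (by simpa using hB), Matrix.mul_nonsing_inv _ hB,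
    Matrix.one_mul, Matrix.mul_one]

lemma inertia_eq {n : ℕ} (d₁ d₂ : Fin n → ℝ) (B : Matrix (Fin n) (Fin n) ℝ)
    (hB : IsUnit B.det) (h : diagonal d₂ = Bᵀ * diagonal d₁ * B) :
    (univ.filter fun i => 0 < d₂ i).card = (univ.filter fun i => 0 < d₁ i).card ∧
    (univ.filter fun i => d₂ i < 0).card = (univ.filter fun i => d₁ i < 0).card := by
  have hrev := congr_rev _ _ _ hB h
  have hneg : diagonal (fun i => -d₂ i) = Bᵀ * diagonal (fun i => -d₁ i) * B := by
    have : (diagonal fun i => -d₂ i) = -diagonal d₂ := by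
      ext i j; by_cases hij : i = j <;> simp [diagonal, hij]
    rw [this, h]
    have : (diagonal fun i => -d₁ i) = -diagonal d₁ := by
      ext i j; by_cases hij : i = j <;> simp [diagonal, hij]
    rw [this]
    noncomm_ring
  have hnegrev := congr_rev _ _ _ hB hneg
  constructor
  · exact le_antisymm (inertia_le d₁ d₂ B h) (inertia_le d₂ d₁ B⁻¹ hrev)
  · have h1 := inertia_le (fun i => -d₁ i) (fun i => -d₂ i) B hneg
    have h2 := inertia_le (fun i => -d₂ i) (fun i => -d₁ i) B⁻¹ hnegrev
    simp only [neg_pos] at h1 h2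
    exact le_antisymm h1 h2


lemma leadingMinor_self {n : ℕ} (S : Matrix (Fin n) (Fin n) ℝ) :
    leadingMinor S n = S.det := by
  unfold leadingMinor
  congr 1
  ext i j
  simp [i.2, j.2]

lemma leadingMinor_submatrix {n : ℕ} (S : Matrix (Fin (n+1)) (Fin (n+1)) ℝ) (k : ℕ)
    (hk : k ≤ n) :
    leadingMinor (S.submatrix Fin.castSucc Fin.castSucc) k = leadingMinor S k := by
  unfold leadingMinor
  congr 1
  ext i j
  have hi : (i : ℕ) < n := lt_of_lt_of_le i.2 hk
  have hj : (j : ℕ) < n := lt_of_lt_of_le j.2 hk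
  simp only [of_apply, dif_pos (And.intro hi hj),
    dif_pos (And.intro (Nat.lt_succ_of_lt hi) (Nat.lt_succ_of_lt hj))]
  rfl

lemma decomp : ∀ (n : ℕ) (S : Matrix (Fin n) (Fin n) ℝ), S.IsSymm →
    (∀ k ≤ n, leadingMinor S k ≠ 0) →
    ∃ B : Matrix (Fin n) (Fin n) ℝ, IsUnit B.det ∧
      S = Bᵀ * diagonal (fun k : Fin n =>
        leadingMinor S ((k : ℕ)+1) / leadingMinor S (k : ℕ)) * B := by
  intro n
  induction n with
  | zero =>
    intro S _ _
    exact ⟨1, by simp, by ext i _; exact i.elim0⟩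
  | succ n IH =>
    intro S hsymm hreg
    set A : Matrix (Fin n) (Fin n) ℝ := S.submatrix Fin.castSucc Fin.castSucc with hA
    have hAsymm : A.IsSymm := by
      ext i j
      simpa [hA] using hsymm.apply (Fin.castSucc i) (Fin.castSucc j)
    have hAlm : ∀ k ≤ n, leadingMinor A k = leadingMinor S k := fun k hk =>
      leadingMinor_submatrix S k hk
    have hAreg : ∀ k ≤ n, leadingMinor A k ≠ 0 := fun k hk => by
      rw [hAlm k hk]; exact hreg k (Nat.le_succ_of_le hk)
    have hAdet : A.det = leadingMinor S n := by
      rw [← leadingMinor_self A]; exact hAlm n le_rfl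
    have hAdu : IsUnit A.det := by
      rw [hAdet]; exact (hreg n (Nat.le_succ _)).isUnit
    have : Invertible A := A.invertibleOfIsUnitDet hAdu
    obtain ⟨B, hBu, hBeq⟩ := IH A hAsymm hAreg
    set e : Fin n ⊕ Fin 1 ≃ Fin (n+1) := finSumFinEquiv
    set T : Matrix (Fin n ⊕ Fin 1) (Fin n ⊕ Fin 1) ℝ := S.submatrix e e with hT
    set b : Matrix (Fin n) (Fin 1) ℝ := Matrix.of fun i _ => S (Fin.castSucc i) (Fin.last n)
    set dm : Matrix (Fin 1) (Fin 1) ℝ := Matrix.of fun _ _ => S (Fin.last n) (Fin.last n)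
    have hlast : e (Sum.inr 0) = Fin.last n := by
      simp [e, finSumFinEquiv_apply_right]
      ext; simp
    have hcast : ∀ i : Fin n, e (Sum.inl i) = Fin.castSucc i := by
      intro i; simp [e, finSumFinEquiv_apply_left]
      rfl
    have hTblocks : T = fromBlocks A b bᵀ dm := by
      ext i j
      rcases i with i | i <;> rcases j with j | j <;>
        simp [hT, fromBlocks, hcast, hlast, hA, b, dm, Fin.fin_one_eq_zero] <;>
        simpa using hsymm.apply _ _
    set sc : Matrix (Fin 1) (Fin 1) ℝ := dm - bᵀ * A⁻¹ * b with hsc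
    have hAinvsymm : A⁻¹ᵀ = A⁻¹ := by
      rw [transpose_nonsing_inv, hAsymm.eq]
    set E : Matrix (Fin n ⊕ Fin 1) (Fin n ⊕ Fin 1) ℝ := fromBlocks 1 (A⁻¹ * b) 0 1 with hE
    have hTE : T = Eᵀ * fromBlocks A 0 0 sc * E := by
      rw [hTblocks, hE, fromBlocks_transpose, transpose_one, transpose_zero, transpose_mul,
        hAinvsymm, fromBlocks_multiply, fromBlocks_multiply]
      simp only [Matrix.one_mul, Matrix.mul_one, Matrix.zero_mul, Matrix.mul_zero,
        add_zero, zero_add]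
      have hAb2 : A * (A⁻¹ * b) = b := by
        rw [← Matrix.mul_assoc, Matrix.mul_nonsing_inv A hAdu, Matrix.one_mul]
      have hbA : bᵀ * A⁻¹ * A = bᵀ := by
        rw [Matrix.mul_assoc, Matrix.nonsing_inv_mul A hAdu, Matrix.mul_one]
      have h22 : bᵀ * A⁻¹ * A * (A⁻¹ * b) + 1ᵀ * sc = dm := by
        rw [hbA, transpose_one, Matrix.one_mul, hsc, ← Matrix.mul_assoc]; abel
      rw [h22, hAb2, hbA]
    set w : ℝ := leadingMinor S (n+1) / leadingMinor S n with hw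
    have hdetT : T.det = S.det := det_submatrix_equiv_self e S
    have hdetS : S.det = A.det * sc.det := by
      rw [← hdetT, hTblocks, det_fromBlocks₁₁, invOf_eq_nonsing_inv]
    have hscdet : sc.det = sc 0 0 := det_fin_one sc
    have hscw : sc 0 0 = w := by
      have hμ : leadingMinor S (n+1) = S.det := leadingMinor_self S
      rw [hw, hμ, hdetS, hAdet, ← hscdet]
      field_simp [hreg n (Nat.le_succ _)]
    have hscdiag : sc = diagonal (fun _ : Fin 1 => w) := by
      ext i j
      fin_cases i <;> fin_cases j
      simpa [diagonal] using hscw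
    set dA : Fin n → ℝ := fun k => leadingMinor A ((k:ℕ)+1) / leadingMinor A (k:ℕ) with hdA
    set F : Matrix (Fin n ⊕ Fin 1) (Fin n ⊕ Fin 1) ℝ := fromBlocks B 0 0 1 with hF
    have hblockF : fromBlocks A 0 0 sc = Fᵀ * fromBlocks (diagonal dA) 0 0 sc * F := by
      rw [hF, fromBlocks_transpose, fromBlocks_multiply, fromBlocks_multiply]
      simp only [Matrix.one_mul, Matrix.mul_one, Matrix.zero_mul, Matrix.mul_zero,
        add_zero, zero_add, transpose_zero, transpose_one]
      rw [← hBeq]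
    have hdiagsum : fromBlocks (diagonal dA) 0 0 sc
        = diagonal (Sum.elim dA (fun _ : Fin 1 => w)) := by
      rw [hscdiag, fromBlocks_diagonal]
    have hTfin : T = (F * E)ᵀ * diagonal (Sum.elim dA (fun _ : Fin 1 => w)) * (F * E) := by
      rw [transpose_mul, ← hdiagsum, hTE, hblockF]
      noncomm_ring
    set G : Matrix (Fin (n+1)) (Fin (n+1)) ℝ := (F * E).submatrix e.symm e.symm with hG
    have hSsub : S = T.submatrix e.symm e.symm := by
      rw [hT]
      ext i j
      simp
    have hfun : (Sum.elim dA (fun _ : Fin 1 => w)) ∘ e.symm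
        = fun k : Fin (n+1) => leadingMinor S ((k:ℕ)+1) / leadingMinor S (k:ℕ) := by
      funext k
      induction k using Fin.lastCases with
      | last =>
        have hel : e.symm (Fin.last n) = Sum.inr 0 := by
          rw [← hlast, Equiv.symm_apply_apply]
        simp [hel, hw, Fin.val_last]
      | cast j =>
        have hel : e.symm (Fin.castSucc j) = Sum.inl j := by
          rw [← hcast j, Equiv.symm_apply_apply]
        simp only [Function.comp_apply, hel, Sum.elim_inl, hdA, Fin.coe_castSucc]
        rw [hAlm ((j:ℕ)+1) j.2, hAlm (j:ℕ) (le_of_lt j.2)]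
    have hSfin : S = Gᵀ * diagonal (fun k : Fin (n+1) =>
        leadingMinor S ((k:ℕ)+1) / leadingMinor S (k:ℕ)) * G := by
      have key : T.submatrix e.symm e.symm = Gᵀ * diagonal (fun k : Fin (n+1) =>
          leadingMinor S ((k:ℕ)+1) / leadingMinor S (k:ℕ)) * G := by
        rw [hTfin, ← hfun, hG]
        rw [← submatrix_mul_equiv _ _ _ e.symm _, ← submatrix_mul_equiv _ _ _ e.symm _]
        rw [← Matrix.transpose_submatrix, ← submatrix_diagonal_equiv
          (Sum.elim dA (fun _ : Fin 1 => w)) e.symm]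
      exact hSsub.trans key
    refine ⟨G, ?_, hSfin⟩
    rw [hG, det_submatrix_equiv_self, det_mul, hF, hE, det_fromBlocks_zero₂₁,
      det_fromBlocks_zero₂₁, det_one, det_one]
    simpa using hBu

lemma eig_counts {n : ℕ} (S : Matrix (Fin n) (Fin n) ℝ) (hH : S.IsHermitian)
    (d : Fin n → ℝ) (B : Matrix (Fin n) (Fin n) ℝ) (hBu : IsUnit B.det)
    (hBeq : S = Bᵀ * diagonal d * B) :
    (univ.filter fun i => 0 < hH.eigenvalues i).card =
      (univ.filter fun i => 0 < d i).card ∧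
    (univ.filter fun i => hH.eigenvalues i < 0).card =
      (univ.filter fun i => d i < 0).card := by
  set U : Matrix (Fin n) (Fin n) ℝ :=
    (Matrix.IsHermitian.eigenvectorUnitary hH : Matrix (Fin n) (Fin n) ℝ) with hU
  have hstar : star U = Uᵀ := by
    rw [Matrix.star_eq_conjTranspose, conjTranspose_eq_transpose_of_trivial]
  have hdiag : diagonal hH.eigenvalues = Uᵀ * S * U := by
    have h1 := hH.conjStarAlgAut_star_eigenvectorUnitary
    rw [Unitary.conjStarAlgAut_star_apply] at h1
    rw [← hU] at h1
    rw [hstar] at h1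
    have h2 : diagonal ((RCLike.ofReal : ℝ → ℝ) ∘ hH.eigenvalues)
        = diagonal hH.eigenvalues := by
      simp [RCLike.ofReal_real_eq_id]
    rw [← h2, ← h1]
  have hUdet : IsUnit U.det := by
    have h2 : U * star U = 1 := Unitary.coe_mul_star_self _
    exact IsUnit.of_mul_eq_one (star U).det (by rw [← det_mul, h2, det_one])
  have hcong : diagonal hH.eigenvalues = (B * U)ᵀ * diagonal d * (B * U) := by
    rw [hdiag, hBeq, transpose_mul]
    noncomm_ring
  exact inertia_eq d _ (B * U) (by rw [det_mul]; exact hBu.mul hUdet) hcong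


lemma card_fin_filter {n : ℕ} (P : ℕ → Prop) [DecidablePred P] :
    (univ.filter fun i : Fin n => P i.1).card = ((Finset.range n).filter P).card := by
  rw [Finset.card_filter, Finset.card_filter]
  exact Fin.sum_univ_eq_sum_range (fun i => if P i then 1 else 0) n

/-- Sylvester–Jacobi–Gundelfinger–Frobenius: for a regular real symmetric `n × n` matrix `S`
(all leading principal minors nonzero), the signature equals
`∑ₖ sign(μₖ₊₁/μₖ) = n − 2·var(μ₀,…,μₙ)`. -/
theorem sylvester_jacobi_gundelfinger_frobenius (n : ℕ) (S : Matrix (Fin n) (Fin n) ℝ)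
    (hS : S.IsSymm) (hreg : ∀ k ≤ n, leadingMinor S k ≠ 0) :
    (matrixSignature S : ℝ) =
      ∑ k ∈ Finset.range n, Real.sign (leadingMinor S (k + 1) / leadingMinor S k) ∧
    matrixSignature S =
      (n : ℤ) - 2 * ((Finset.range n).filter fun k =>
        leadingMinor S k * leadingMinor S (k + 1) < 0).card := by
  classical
  have hH : S.IsHermitian := by
    rw [Matrix.IsHermitian, conjTranspose_eq_transpose_of_trivial]; exact hS
  obtain ⟨B, hBu, hBeq⟩ := decomp n S hS hreg
  have hcnt := eig_counts S hH
    (fun k : Fin n => leadingMinor S ((k : ℕ)+1) / leadingMinor S (k : ℕ)) B hBu hBeq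
  set f : ℕ → ℝ := fun k => leadingMinor S (k+1) / leadingMinor S k with hf
  have hP : (univ.filter fun i => 0 < hH.eigenvalues i).card
      = ((Finset.range n).filter fun k => 0 < f k).card :=
    hcnt.1.trans (card_fin_filter (fun k => 0 < f k))
  have hN : (univ.filter fun i => hH.eigenvalues i < 0).card
      = ((Finset.range n).filter fun k => f k < 0).card :=
    hcnt.2.trans (card_fin_filter (fun k => f k < 0))
  have hsig : matrixSignature S =
      (((Finset.range n).filter fun k => 0 < f k).card : ℤ)
        - (((Finset.range n).filter fun k => f k < 0).card : ℤ) := by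
    rw [matrixSignature, dif_pos hH, hP, hN]
  have hfne : ∀ k < n, f k ≠ 0 := fun k hk =>
    div_ne_zero (hreg (k+1) hk) (hreg k (le_of_lt hk))
  have hcongr : (Finset.range n).filter (fun k => ¬ 0 < f k)
      = (Finset.range n).filter (fun k => f k < 0) := by
    apply Finset.filter_congr
    intro k hk
    simp only [Finset.mem_range] at hk
    simp only [not_lt]
    exact ⟨fun h => h.lt_of_ne (hfne k hk), le_of_lt⟩
  have hsplit : (((Finset.range n).filter fun k => 0 < f k).card
      + ((Finset.range n).filter fun k => f k < 0).card) = n := by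
    rw [← hcongr]
    simpa using Finset.card_filter_add_card_filter_not
      (s := Finset.range n) (p := fun k => 0 < f k)
  constructor
  · have hsum : ∑ k ∈ Finset.range n, Real.sign (f k)
        = (((Finset.range n).filter fun k => 0 < f k).card : ℝ)
          - (((Finset.range n).filter fun k => f k < 0).card : ℝ) := by
      rw [← Finset.sum_filter_add_sum_filter_not (Finset.range n) (fun k => 0 < f k)]
      rw [hcongr]
      rw [Finset.sum_congr rfl (fun k hk => Real.sign_of_pos (Finset.mem_filter.1 hk).2),
        Finset.sum_congr rfl (g := fun _ => (-1 : ℝ))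
          (fun k hk => Real.sign_of_neg (Finset.mem_filter.1 hk).2)]
      simp [sub_eq_add_neg]
    rw [show (∑ k ∈ Finset.range n, Real.sign (leadingMinor S (k + 1) / leadingMinor S k))
        = ∑ k ∈ Finset.range n, Real.sign (f k) from rfl, hsum, hsig]
    push_cast
    ring
  · have hmn : ((Finset.range n).filter fun k =>
        leadingMinor S k * leadingMinor S (k + 1) < 0)
        = (Finset.range n).filter (fun k => f k < 0) := by
      apply Finset.filter_congr
      intro k hk
      simp only [Finset.mem_range] at hk
      have h0 : leadingMinor S k ≠ 0 := hreg k (le_of_lt hk)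
      have h1 : leadingMinor S (k+1) ≠ 0 := hreg (k+1) hk
      simp only [hf]
      rw [div_neg_iff, mul_neg_iff]
      constructor
      · rintro (⟨ha, hb⟩ | ⟨ha, hb⟩)
        · exact Or.inr ⟨hb, ha⟩
        · exact Or.inl ⟨hb, ha⟩
      · rintro (⟨ha, hb⟩ | ⟨ha, hb⟩)
        · exact Or.inr ⟨hb, ha⟩
        · exact Or.inl ⟨hb, ha⟩
    rw [hmn, hsig]
    have : (((Finset.range n).filter fun k => 0 < f k).card : ℤ)
        + (((Finset.range n).filter fun k => f k < 0).card : ℤ) = n := by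
      exact_mod_cast congrArg (Nat.cast : ℕ → ℤ) hsplit
    omega
end

section
/- Sturm's theorem: let P ∈ ℝ[X] be a regular polynomial of degree n with Sturm sequence P_0 = P, P_1 = P′, P_{k+1} = P_k Q_k − P_{k−1}, P_n a nonzero constant. Then for regular real numbers a < b (i.e. no P_k vanishes at a or b), the number of real roots of P in [a, b] equals var(a) − var(b), where var(x) is the number of sign changes in the sequence P_0(x), P_1(x), …, P_n(x). -/
lemma sturm_aux_sign {p : Polynomial ℝ} {a b : ℝ} (hab : a ≤ b)
    (h : ∀ x ∈ Set.Icc a b, p.eval x ≠ 0) : 0 < p.eval a * p.eval b := by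
  have ha := h a ⟨le_refl a, hab⟩
  have hb := h b ⟨hab, le_refl b⟩
  rcases lt_trichotomy (p.eval a * p.eval b) 0 with hlt | heq | hgt
  · exfalso
    have hc : ContinuousOn (fun x => p.eval x) (Set.Icc a b) := p.continuous.continuousOn
    rcases mul_neg_iff.mp hlt with ⟨h1, h2⟩ | ⟨h1, h2⟩
    · obtain ⟨x, hx, hx0⟩ := intermediate_value_Icc' hab hc ⟨le_of_lt h2, le_of_lt h1⟩
      exact h x hx hx0
    · obtain ⟨x, hx, hx0⟩ := intermediate_value_Icc hab hc ⟨le_of_lt h1, le_of_lt h2⟩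
      exact h x hx hx0
  · exact absurd heq (mul_ne_zero ha hb)
  · exact hgt

lemma sturm_aux_pair {p : Polynomial ℝ} {a b : ℝ} (hab : a ≤ b)
    (h : ∀ x ∈ Set.Icc a b, p.eval x ≠ 0) :
    ∀ x ∈ Set.Icc a b, ∀ y ∈ Set.Icc a b, 0 < p.eval x * p.eval y := by
  intro x hx y hy
  have h1 : 0 < p.eval a * p.eval x :=
    sturm_aux_sign hx.1 (fun z hz => h z ⟨hz.1, le_trans hz.2 hx.2⟩)
  have h2 : 0 < p.eval a * p.eval y :=
    sturm_aux_sign hy.1 (fun z hz => h z ⟨hz.1, le_trans hz.2 hy.2⟩)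
  nlinarith [sq_nonneg (p.eval a), mul_pos h1 h2]

lemma sturm_aux_iff {u v u' v' : ℝ} (h1 : 0 < u * u') (h2 : 0 < v * v') :
    u * v < 0 ↔ u' * v' < 0 := by
  constructor <;> intro h <;> nlinarith

lemma sturm_aux_xor {u v w : ℝ} (huw : u * w < 0) (hv : v ≠ 0) :
    u * v < 0 ↔ ¬ (v * w < 0) := by
  have hv2 : 0 < v ^ 2 := by positivity
  constructor
  · intro h1 h2
    nlinarith [mul_pos_of_neg_of_neg h1 h2]
  · intro h2
    have hw : w ≠ 0 := by rintro rfl; simp at huw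
    have h3 : 0 < v * w := lt_of_le_of_ne (not_lt.mp h2) (Ne.symm (mul_ne_zero hv hw))
    nlinarith [mul_neg_of_pos_of_neg hv2 huw]

lemma sturm_aux_card {i j : ℕ} (hij : i ≠ j) (p : ℕ → Prop) [DecidablePred p]
    (h : p i ↔ ¬ p j) : (Finset.filter p {i, j}).card = 1 := by
  have : ({i, j} : Finset ℕ) = insert i {j} := rfl
  rw [this, Finset.filter_insert, Finset.filter_singleton]
  by_cases hpi : p i
  · have hpj : ¬ p j := h.mp hpi
    simp [hpi, hpj]
  · have hpj : p j := not_not.mp (fun hh => hpi (h.mpr hh))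
    simp [hpi, hpj]

lemma sturm_flat (n : ℕ) (Ps : ℕ → Polynomial ℝ)
    (hPsne : ∀ k ≤ n, Ps k ≠ 0)
    (a b : ℝ) (hab : a < b)
    (ha : ∀ k ≤ n, (Ps k).eval a ≠ 0) (hb : ∀ k ≤ n, (Ps k).eval b ≠ 0)
    (hcrit : ∀ x, a < x → x < b → ∀ k ≤ n, (Ps k).eval x ≠ 0) :
    (((Ps 0).roots.toFinset.filter fun x => a ≤ x ∧ x ≤ b).card : ℤ) =
      (((Finset.range n).filter fun k =>
          (Ps k).eval a * (Ps (k + 1)).eval a < 0).card : ℤ) -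
      (((Finset.range n).filter fun k =>
          (Ps k).eval b * (Ps (k + 1)).eval b < 0).card : ℤ) := by
  have hnv : ∀ k ≤ n, ∀ x ∈ Set.Icc a b, (Ps k).eval x ≠ 0 := by
    intro k hk x hx
    rcases eq_or_lt_of_le hx.1 with h1 | h1
    · exact h1 ▸ ha k hk
    rcases eq_or_lt_of_le hx.2 with h2 | h2
    · exact h2 ▸ hb k hk
    exact hcrit x h1 h2 k hk
  have hroots : (Ps 0).roots.toFinset.filter (fun x => a ≤ x ∧ x ≤ b) = ∅ := by
    ext x
    simp only [Finset.mem_filter, Finset.notMem_empty, iff_false, Multiset.mem_toFinset]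
    rintro ⟨hx, h1, h2⟩
    have hx0 : (Ps 0).eval x = 0 := (Polynomial.mem_roots (hPsne 0 n.zero_le)).mp hx
    exact hnv 0 n.zero_le x ⟨h1, h2⟩ hx0
  have hfilter : (Finset.range n).filter (fun k => (Ps k).eval a * (Ps (k + 1)).eval a < 0) =
      (Finset.range n).filter (fun k => (Ps k).eval b * (Ps (k + 1)).eval b < 0) := by
    apply Finset.filter_congr
    intro k hk
    have hkn : k < n := Finset.mem_range.mp hk
    have hIcc : a ∈ Set.Icc a b := ⟨le_refl a, le_of_lt hab⟩
    have hIcc' : b ∈ Set.Icc a b := ⟨le_of_lt hab, le_refl b⟩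
    have h1 := sturm_aux_pair (le_of_lt hab) (hnv k (le_of_lt hkn)) a hIcc b hIcc'
    have h2 := sturm_aux_pair (le_of_lt hab) (hnv (k + 1) hkn) a hIcc b hIcc'
    exact sturm_aux_iff h1 h2
  rw [hroots, hfilter]
  simp

open Polynomial in
lemma sturm_jump (n : ℕ) (P : Polynomial ℝ) (Ps Q : ℕ → Polynomial ℝ)
    (hP0 : Ps 0 = P) (hP1 : Ps 1 = Polynomial.derivative P)
    (hrec : ∀ k, 1 ≤ k → k ≤ n → Ps (k + 1) = Ps k * Q k - Ps (k - 1))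
    (hPnconst : (Ps n).natDegree = 0) (hPnne : Ps n ≠ 0)
    (hPsne : ∀ k ≤ n, Ps k ≠ 0)
    (hdistinct : ∀ j k, j ≤ n → k ≤ n → j ≠ k →
      ∀ x : ℝ, (Ps j).eval x = 0 → (Ps k).eval x ≠ 0)
    (a b c : ℝ) (hac : a < c) (hcb : c < b)
    (ha : ∀ k ≤ n, (Ps k).eval a ≠ 0) (hb : ∀ k ≤ n, (Ps k).eval b ≠ 0)
    (hcrit : ∀ x, a < x → x < b → x ≠ c → ∀ k ≤ n, (Ps k).eval x ≠ 0)
    (k0 : ℕ) (hk0 : k0 ≤ n) (hck0 : (Ps k0).eval c = 0) :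
    (((Ps 0).roots.toFinset.filter fun x => a ≤ x ∧ x ≤ b).card : ℤ) =
      (((Finset.range n).filter fun k =>
          (Ps k).eval a * (Ps (k + 1)).eval a < 0).card : ℤ) -
      (((Finset.range n).filter fun k =>
          (Ps k).eval b * (Ps (k + 1)).eval b < 0).card : ℤ) := by
  have hab : a < b := hac.trans hcb
  have haI : a ∈ Set.Icc a b := ⟨le_refl a, hab.le⟩
  have hbI : b ∈ Set.Icc a b := ⟨hab.le, le_refl b⟩
  have hcI : c ∈ Set.Icc a b := ⟨hac.le, hcb.le⟩
  -- k0 < n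
  have hk0n : k0 ≠ n := by
    intro h
    obtain ⟨r, hr⟩ := Polynomial.natDegree_eq_zero.mp hPnconst
    apply hPnne
    rw [h] at hck0
    rw [← hr] at hck0 ⊢
    simp at hck0
    simp [hck0]
  have hk0lt : k0 < n := lt_of_le_of_ne hk0 hk0n
  -- nonvanishing of all other Ps k on [a,b]
  have hnv : ∀ k, k ≤ n → k ≠ k0 → ∀ x ∈ Set.Icc a b, (Ps k).eval x ≠ 0 := by
    intro k hk hkk0 x hx
    rcases eq_or_lt_of_le hx.1 with h1 | h1
    · exact h1 ▸ ha k hk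
    rcases eq_or_lt_of_le hx.2 with h2 | h2
    · exact h2 ▸ hb k hk
    by_cases hxc : x = c
    · subst hxc
      exact hdistinct k0 k hk0 hk (fun h => hkk0 h.symm) x hck0
    · exact hcrit x h1 h2 hxc k hk
  have hpair : ∀ k, k ≤ n → k ≠ k0 →
      ∀ x ∈ Set.Icc a b, ∀ y ∈ Set.Icc a b, 0 < (Ps k).eval x * (Ps k).eval y :=
    fun k hk hkk0 => sturm_aux_pair hab.le (hnv k hk hkk0)
  by_cases hk00 : k0 = 0
  · -- c is a root of P itself
    subst hk00
    have hn1 : 1 ≤ n := hk0lt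
    -- the roots of P in [a,b] are exactly {c}
    have hroots : (Ps 0).roots.toFinset.filter (fun x => a ≤ x ∧ x ≤ b) = {c} := by
      ext x
      simp only [Finset.mem_filter, Multiset.mem_toFinset,
        Polynomial.mem_roots (hPsne 0 n.zero_le), Finset.mem_singleton]
      constructor
      · rintro ⟨hx, h1, h2⟩
        by_contra hxc
        have hx0 : (Ps 0).eval x = 0 := hx
        rcases eq_or_lt_of_le h1 with h1' | h1'
        · exact ha 0 n.zero_le (h1' ▸ hx0)
        rcases eq_or_lt_of_le h2 with h2' | h2'
        · exact hb 0 n.zero_le (h2' ▸ hx0)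
        exact hcrit x h1' h2' hxc 0 n.zero_le hx0
      · rintro rfl
        exact ⟨hck0, hac.le, hcb.le⟩
    -- sign of P * P' at a and at b
    have hPc : P.eval c = 0 := by rw [← hP0]; exact hck0
    have hterm_a : (Ps 0).eval a * (Ps 1).eval a < 0 := by
      obtain ⟨ξ, hξ, hsl⟩ := exists_hasDerivAt_eq_slope (fun x => P.eval x)
        (fun x => (Polynomial.derivative P).eval x) hac P.continuous.continuousOn
        (fun x _ => P.hasDerivAt x)
      have hca : c - a ≠ 0 := sub_ne_zero.mpr hac.ne'
      rw [eq_div_iff hca] at hsl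
      simp only [hPc, zero_sub] at hsl
      have hξI : ξ ∈ Set.Icc a b := ⟨hξ.1.le, hξ.2.le.trans hcb.le⟩
      have hsp : 0 < (Ps 1).eval a * (Ps 1).eval ξ :=
        hpair 1 hn1 one_ne_zero a haI ξ hξI
      rw [hP1] at hsp
      have hPa : P.eval a = -((Polynomial.derivative P).eval ξ * (c - a)) := by linarith
      rw [hP0, hP1, hPa]
      nlinarith [mul_pos hsp (sub_pos.mpr hac)]
    have hterm_b : ¬ ((Ps 0).eval b * (Ps 1).eval b < 0) := by
      obtain ⟨η, hη, hsl⟩ := exists_hasDerivAt_eq_slope (fun x => P.eval x)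
        (fun x => (Polynomial.derivative P).eval x) hcb P.continuous.continuousOn
        (fun x _ => P.hasDerivAt x)
      have hbc : b - c ≠ 0 := sub_ne_zero.mpr hcb.ne'
      rw [eq_div_iff hbc] at hsl
      simp only [hPc, sub_zero] at hsl
      have hηI : η ∈ Set.Icc a b := ⟨hac.le.trans hη.1.le, hη.2.le⟩
      have hsp : 0 < (Ps 1).eval b * (Ps 1).eval η :=
        hpair 1 hn1 one_ne_zero b hbI η hηI
      rw [hP1] at hsp
      have hPb : P.eval b = (Polynomial.derivative P).eval η * (b - c) := hsl.symm
      rw [hP0, hP1, hPb]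
      push_neg
      nlinarith [mul_pos hsp (sub_pos.mpr hcb)]
    -- the sign-change filters differ exactly at k = 0
    have hfa : (Finset.range n).filter (fun k => (Ps k).eval a * (Ps (k + 1)).eval a < 0) =
        insert 0 ((Finset.range n).filter (fun k => (Ps k).eval b * (Ps (k + 1)).eval b < 0)) := by
      ext k
      simp only [Finset.mem_filter, Finset.mem_insert, Finset.mem_range]
      by_cases hk : k = 0
      · subst hk
        exact ⟨fun _ => Or.inl rfl, fun _ => ⟨hn1, hterm_a⟩⟩
      · have : k < n → ((Ps k).eval a * (Ps (k + 1)).eval a < 0 ↔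
            (Ps k).eval b * (Ps (k + 1)).eval b < 0) := by
          intro hkn
          exact sturm_aux_iff (hpair k hkn.le hk a haI b hbI)
            (hpair (k + 1) hkn (Nat.succ_ne_zero k) a haI b hbI)
        constructor
        · rintro ⟨hkn, hp⟩
          exact Or.inr ⟨hkn, (this hkn).mp hp⟩
        · rintro (rfl | ⟨hkn, hp⟩)
          · exact absurd rfl hk
          · exact ⟨hkn, (this hkn).mpr hp⟩
    have h0nb : 0 ∉ (Finset.range n).filter
        (fun k => (Ps k).eval b * (Ps (k + 1)).eval b < 0) := by
      simp only [Finset.mem_filter]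
      rintro ⟨-, hp⟩
      exact hterm_b hp
    rw [hroots, hfa, Finset.card_insert_of_notMem h0nb, Finset.card_singleton]
    push_cast
    ring
  · -- c is a root of an intermediate Ps k0, 1 ≤ k0 < n
    have hk01 : 1 ≤ k0 := Nat.one_le_iff_ne_zero.mpr hk00
    have hkm : k0 - 1 ≤ n := le_trans (Nat.sub_le k0 1) hk0
    have hkp : k0 + 1 ≤ n := hk0lt
    have hkm_ne : k0 - 1 ≠ k0 := by omega
    have hkp_ne : k0 + 1 ≠ k0 := by omega
    have hsucc : (k0 - 1) + 1 = k0 := by omega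
    have hval : (Ps (k0 + 1)).eval c = -((Ps (k0 - 1)).eval c) := by
      rw [hrec k0 hk01 hk0]
      simp [hck0]
    have hcm : (Ps (k0 - 1)).eval c ≠ 0 :=
      hdistinct k0 (k0 - 1) hk0 hkm (Ne.symm hkm_ne) c hck0
    have huwc : (Ps (k0 - 1)).eval c * (Ps (k0 + 1)).eval c < 0 := by
      rw [hval]
      have h2 : 0 < ((Ps (k0 - 1)).eval c) ^ 2 := by positivity
      nlinarith
    have key : ∀ x, x ∈ Set.Icc a b → (Ps k0).eval x ≠ 0 →
        ((Ps (k0 - 1)).eval x * (Ps k0).eval x < 0 ↔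
          ¬ ((Ps k0).eval x * (Ps (k0 + 1)).eval x < 0)) := by
      intro x hx hvx
      have p1 := hpair (k0 - 1) hkm hkm_ne x hx c hcI
      have p2 := hpair (k0 + 1) hkp hkp_ne x hx c hcI
      have huwx : (Ps (k0 - 1)).eval x * (Ps (k0 + 1)).eval x < 0 := by nlinarith
      exact sturm_aux_xor huwx hvx
    -- no roots of P in [a,b]
    have hroots : (Ps 0).roots.toFinset.filter (fun x => a ≤ x ∧ x ≤ b) = ∅ := by
      ext x
      simp only [Finset.mem_filter, Finset.notMem_empty, iff_false, Multiset.mem_toFinset]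
      rintro ⟨hx, h1, h2⟩
      have hx0 : (Ps 0).eval x = 0 := (Polynomial.mem_roots (hPsne 0 n.zero_le)).mp hx
      exact hnv 0 n.zero_le (Ne.symm hk00) x ⟨h1, h2⟩ hx0
    -- counting
    have hTsub : ({k0 - 1, k0} : Finset ℕ) ⊆ Finset.range n := by
      intro k hk
      simp only [Finset.mem_insert, Finset.mem_singleton] at hk
      rcases hk with rfl | rfl <;> simp only [Finset.mem_range] <;> omega
    have hcardsplit : ∀ x : ℝ,
        ((Finset.range n).filter (fun k => (Ps k).eval x * (Ps (k + 1)).eval x < 0)).card =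
        ((Finset.range n \ {k0 - 1, k0}).filter
            (fun k => (Ps k).eval x * (Ps (k + 1)).eval x < 0)).card +
        (({k0 - 1, k0} : Finset ℕ).filter
            (fun k => (Ps k).eval x * (Ps (k + 1)).eval x < 0)).card := by
      intro x
      rw [← Finset.card_union_of_disjoint
          (Finset.disjoint_filter_filter Finset.sdiff_disjoint),
        ← Finset.filter_union, Finset.sdiff_union_of_subset hTsub]
    have hsd : (Finset.range n \ {k0 - 1, k0}).filter
          (fun k => (Ps k).eval a * (Ps (k + 1)).eval a < 0) =
        (Finset.range n \ {k0 - 1, k0}).filter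
          (fun k => (Ps k).eval b * (Ps (k + 1)).eval b < 0) := by
      apply Finset.filter_congr
      intro k hk
      simp only [Finset.mem_sdiff, Finset.mem_range, Finset.mem_insert,
        Finset.mem_singleton] at hk
      obtain ⟨hkn, hknot⟩ := hk
      push_neg at hknot
      have hkne : k ≠ k0 := hknot.2
      have hkne' : k + 1 ≠ k0 := by omega
      exact sturm_aux_iff (hpair k hkn.le hkne a haI b hbI)
        (hpair (k + 1) hkn hkne' a haI b hbI)
    have hTa : (({k0 - 1, k0} : Finset ℕ).filter
        (fun k => (Ps k).eval a * (Ps (k + 1)).eval a < 0)).card = 1 := by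
      apply sturm_aux_card hkm_ne
      rw [hsucc]
      exact key a haI (ha k0 hk0)
    have hTb : (({k0 - 1, k0} : Finset ℕ).filter
        (fun k => (Ps k).eval b * (Ps (k + 1)).eval b < 0)).card = 1 := by
      apply sturm_aux_card hkm_ne
      rw [hsucc]
      exact key b hbI (hb k0 hk0)
    rw [hroots, hcardsplit a, hcardsplit b, hsd, hTa, hTb]
    simp


/-- Sturm's theorem: for a regular degree-`n` polynomial `P` with Sturm sequence
`P₀ = P, P₁ = P', P_{k+1} = P_k Q_k − P_{k−1}` ending in a nonzero constant `P_n`,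
and regular `a < b`, the number of real roots of `P` in `[a, b]` equals
`var(a) − var(b)`, where `var(x)` counts the sign changes in `(P₀(x), …, P_n(x))`. -/
theorem sturm_theorem (n : ℕ) (P : Polynomial ℝ) (Ps Q : ℕ → Polynomial ℝ)
    (hdeg : P.natDegree = n)
    (hP0 : Ps 0 = P) (hP1 : Ps 1 = Polynomial.derivative P)
    (hrec : ∀ k, 1 ≤ k → k ≤ n → Ps (k + 1) = Ps k * Q k - Ps (k - 1))
    (hdegdec : ∀ k < n, (Ps (k + 1)).degree < (Ps k).degree)
    (hPnconst : (Ps n).natDegree = 0) (hPnne : Ps n ≠ 0) (hPn1 : Ps (n + 1) = 0)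
    -- regularity: the real roots of `P₀, …, P_n` are all distinct and nonzero
    (hdistinct : ∀ j k, j ≤ n → k ≤ n → j ≠ k →
      ∀ x : ℝ, (Ps j).eval x = 0 → (Ps k).eval x ≠ 0)
    (hnodup : ∀ k ≤ n, (Ps k).roots.Nodup)
    (hroots0 : ∀ k ≤ n, (Ps k).eval 0 ≠ 0)
    -- `a < b` are regular points
    (a b : ℝ) (hab : a < b)
    (ha : ∀ k ≤ n, (Ps k).eval a ≠ 0) (hb : ∀ k ≤ n, (Ps k).eval b ≠ 0) :
    ((P.roots.toFinset.filter fun x => a ≤ x ∧ x ≤ b).card : ℤ) =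
      (((Finset.range n).filter fun k =>
          (Ps k).eval a * (Ps (k + 1)).eval a < 0).card : ℤ) -
      (((Finset.range n).filter fun k =>
          (Ps k).eval b * (Ps (k + 1)).eval b < 0).card : ℤ) := by
  have hPsne : ∀ k ≤ n, Ps k ≠ 0 := by
    intro k hk
    rcases eq_or_lt_of_le hk with rfl | hlt
    · exact hPnne
    · intro h
      have hlt2 := hdegdec k hlt
      rw [h, Polynomial.degree_zero] at hlt2
      exact not_lt_bot hlt2
  -- the set of critical points in an open interval
  set crit : ℝ → ℝ → Finset ℝ := fun x y =>
    ((Finset.range (n + 1)).biUnion fun k => (Ps k).roots.toFinset).filter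
      fun z => x < z ∧ z < y with hcrit_def
  have hmem : ∀ x y z, z ∈ crit x y ↔ (∃ k ≤ n, (Ps k).eval z = 0) ∧ x < z ∧ z < y := by
    intro x y z
    simp only [hcrit_def, Finset.mem_filter, Finset.mem_biUnion, Finset.mem_range,
      Multiset.mem_toFinset, Nat.lt_succ_iff]
    constructor
    · rintro ⟨⟨k, hk, hz⟩, h1, h2⟩
      exact ⟨⟨k, hk, ((Polynomial.mem_roots (hPsne k hk)).mp hz : _)⟩, h1, h2⟩
    · rintro ⟨⟨k, hk, hz⟩, h1, h2⟩
      exact ⟨⟨k, hk, (Polynomial.mem_roots (hPsne k hk)).mpr hz⟩, h1, h2⟩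
  have main : ∀ N : ℕ, ∀ x y : ℝ, x < y → (∀ k ≤ n, (Ps k).eval x ≠ 0) →
      (∀ k ≤ n, (Ps k).eval y ≠ 0) → (crit x y).card ≤ N →
      (((Ps 0).roots.toFinset.filter fun z => x ≤ z ∧ z ≤ y).card : ℤ) =
      (((Finset.range n).filter fun k =>
          (Ps k).eval x * (Ps (k + 1)).eval x < 0).card : ℤ) -
      (((Finset.range n).filter fun k =>
          (Ps k).eval y * (Ps (k + 1)).eval y < 0).card : ℤ) := by
    intro N
    induction N with
    | zero =>
      intro x y hxy hx hy hcard
      apply sturm_flat n Ps hPsne x y hxy hx hy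
      intro z h1 h2 k hk hz
      have hzc : z ∈ crit x y := (hmem x y z).mpr ⟨⟨k, hk, hz⟩, h1, h2⟩
      have := Finset.card_pos.mpr ⟨z, hzc⟩
      omega
    | succ N ih =>
      intro x y hxy hx hy hcard
      rcases Finset.eq_empty_or_nonempty (crit x y) with hS | hS
      · apply sturm_flat n Ps hPsne x y hxy hx hy
        intro z h1 h2 k hk hz
        have hzc : z ∈ crit x y := (hmem x y z).mpr ⟨⟨k, hk, hz⟩, h1, h2⟩
        rw [hS] at hzc
        exact absurd hzc (Finset.notMem_empty z)
      · set c := (crit x y).min' hS with hc_def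
        have hcmem := (crit x y).min'_mem hS
        obtain ⟨⟨k0, hk0, hck0⟩, hxc, hcy⟩ := (hmem x y c).mp hcmem
        set S' := (crit x y).erase c with hS'_def
        by_cases hS' : S'.Nonempty
        case pos =>
          set d := min (S'.min' hS') y with hd_def
          have hcd : c < d := by
            rw [hd_def, lt_min_iff]
            constructor
            · have hmem' := S'.min'_mem hS'
              have hne := (Finset.mem_erase.mp hmem').1
              have hle : c ≤ S'.min' hS' :=
                Finset.min'_le _ _ (Finset.mem_erase.mp hmem').2
              exact lt_of_le_of_ne hle (Ne.symm hne)
            · exact hcy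
          have hdy : d ≤ y := min_le_right _ _
          obtain ⟨m, hmI, hmroots⟩ :
              ((Set.Ioo c d) \
                ↑((Finset.range (n + 1)).biUnion fun k => (Ps k).roots.toFinset)).Nonempty :=
            ((Set.Ioo_infinite hcd).diff (Finset.finite_toSet _)).nonempty
          have hm : ∀ k ≤ n, (Ps k).eval m ≠ 0 := by
            intro k hk hzero
            apply hmroots
            simp only [Finset.coe_biUnion, Finset.mem_coe, Finset.mem_biUnion,
              Finset.mem_range, Multiset.mem_toFinset, Set.mem_iUnion]
            exact ⟨k, Nat.lt_succ_of_le hk, (Polynomial.mem_roots (hPsne k hk)).mpr hzero⟩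
          have hcm : c < m := hmI.1
          have hmd : m < d := hmI.2
          have hmy : m < y := lt_of_lt_of_le hmd hdy
          have hxm : x < m := hxc.trans hcm
          have honly : ∀ z, x < z → z < m → z ≠ c → ∀ k ≤ n, (Ps k).eval z ≠ 0 := by
            intro z h1 h2 hzc k hk hz0
            have hzmem : z ∈ crit x y :=
              (hmem x y z).mpr ⟨⟨k, hk, hz0⟩, h1, h2.trans hmy⟩
            have hzS' : z ∈ S' := Finset.mem_erase.mpr ⟨hzc, hzmem⟩
            have hle : S'.min' hS' ≤ z := Finset.min'_le _ _ hzS'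
            have : d ≤ z := le_trans (min_le_left _ _) hle
            linarith
          have e1 := sturm_jump n P Ps Q hP0 hP1 hrec hPnconst hPnne hPsne hdistinct
            x m c hxc hcm hx hm honly k0 hk0 hck0
          have hsub : crit m y ⊆ S' := by
            intro z hz
            obtain ⟨hex, h1, h2⟩ := (hmem m y z).mp hz
            exact Finset.mem_erase.mpr ⟨by intro h; rw [h] at h1; linarith,
              (hmem x y z).mpr ⟨hex, hxm.trans h1, h2⟩⟩
          have hcard' : (crit m y).card ≤ N := by
            have h1 := Finset.card_le_card hsub
            have h2 : S'.card = (crit x y).card - 1 := Finset.card_erase_of_mem hcmem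
            have h3 := Finset.card_pos.mpr hS
            omega
          have e2 := ih m y hmy hm hy hcard'
          have hunion : ((Ps 0).roots.toFinset.filter fun z => x ≤ z ∧ z ≤ y) =
              ((Ps 0).roots.toFinset.filter fun z => x ≤ z ∧ z ≤ m) ∪
              ((Ps 0).roots.toFinset.filter fun z => m ≤ z ∧ z ≤ y) := by
            ext z
            simp only [Finset.mem_union, Finset.mem_filter]
            constructor
            · rintro ⟨hz, h1, h2⟩
              rcases le_total z m with h | h
              · exact Or.inl ⟨hz, h1, h⟩
              · exact Or.inr ⟨hz, h, h2⟩
            · rintro (⟨hz, h1, h2⟩ | ⟨hz, h1, h2⟩)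
              · exact ⟨hz, h1, h2.trans hmy.le⟩
              · exact ⟨hz, hxm.le.trans h1, h2⟩
          have hdisj : Disjoint ((Ps 0).roots.toFinset.filter fun z => x ≤ z ∧ z ≤ m)
              ((Ps 0).roots.toFinset.filter fun z => m ≤ z ∧ z ≤ y) := by
            rw [Finset.disjoint_left]
            intro z hz1 hz2
            obtain ⟨hz, h1, h2⟩ := Finset.mem_filter.mp hz1
            obtain ⟨_, h3, _⟩ := Finset.mem_filter.mp hz2
            have : z = m := le_antisymm h2 h3
            subst this
            exact hm 0 n.zero_le ((Polynomial.mem_roots (hPsne 0 n.zero_le)).mp (Multiset.mem_toFinset.mp hz))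
          rw [hunion, Finset.card_union_of_disjoint hdisj]
          push_cast
          linarith
        case neg =>
          -- S' empty: c is the only critical point in (x, y); pick m in (c, y)
          have hSc : crit x y = {c} := by
            rcases Finset.eq_empty_or_nonempty S' with h | h
            · have := (Finset.erase_eq_empty_iff _ _).mp h
              rcases this with h' | h'
              · exact absurd h' (Finset.nonempty_iff_ne_empty.mp hS)
              · exact h'
            · exact absurd h hS'
          obtain ⟨m, hmI, hmroots⟩ :
              ((Set.Ioo c y) \
                ↑((Finset.range (n + 1)).biUnion fun k => (Ps k).roots.toFinset)).Nonempty :=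
            ((Set.Ioo_infinite hcy).diff (Finset.finite_toSet _)).nonempty
          have hm : ∀ k ≤ n, (Ps k).eval m ≠ 0 := by
            intro k hk hzero
            apply hmroots
            simp only [Finset.coe_biUnion, Finset.mem_coe, Finset.mem_biUnion,
              Finset.mem_range, Multiset.mem_toFinset, Set.mem_iUnion]
            exact ⟨k, Nat.lt_succ_of_le hk, (Polynomial.mem_roots (hPsne k hk)).mpr hzero⟩
          have hcm : c < m := hmI.1
          have hmy : m < y := hmI.2
          have hxm : x < m := hxc.trans hcm
          have honly : ∀ z, x < z → z < m → z ≠ c → ∀ k ≤ n, (Ps k).eval z ≠ 0 := by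
            intro z h1 h2 hzc k hk hz0
            have hzmem : z ∈ crit x y :=
              (hmem x y z).mpr ⟨⟨k, hk, hz0⟩, h1, h2.trans hmy⟩
            rw [hSc, Finset.mem_singleton] at hzmem
            exact hzc hzmem
          have e1 := sturm_jump n P Ps Q hP0 hP1 hrec hPnconst hPnne hPsne hdistinct
            x m c hxc hcm hx hm honly k0 hk0 hck0
          have hcard' : (crit m y).card ≤ N := by
            have hempty : crit m y = ∅ := by
              rw [Finset.eq_empty_iff_forall_notMem]
              intro z hz
              obtain ⟨hex, h1, h2⟩ := (hmem m y z).mp hz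
              have hzmem : z ∈ crit x y :=
                (hmem x y z).mpr ⟨hex, hxm.trans h1, h2⟩
              rw [hSc, Finset.mem_singleton] at hzmem
              rw [hzmem] at h1
              linarith
            rw [hempty]
            simp
          have e2 := ih m y hmy hm hy hcard'
          have hunion : ((Ps 0).roots.toFinset.filter fun z => x ≤ z ∧ z ≤ y) =
              ((Ps 0).roots.toFinset.filter fun z => x ≤ z ∧ z ≤ m) ∪
              ((Ps 0).roots.toFinset.filter fun z => m ≤ z ∧ z ≤ y) := by
            ext z
            simp only [Finset.mem_union, Finset.mem_filter]
            constructor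
            · rintro ⟨hz, h1, h2⟩
              rcases le_total z m with h | h
              · exact Or.inl ⟨hz, h1, h⟩
              · exact Or.inr ⟨hz, h, h2⟩
            · rintro (⟨hz, h1, h2⟩ | ⟨hz, h1, h2⟩)
              · exact ⟨hz, h1, h2.trans hmy.le⟩
              · exact ⟨hz, hxm.le.trans h1, h2⟩
          have hdisj : Disjoint ((Ps 0).roots.toFinset.filter fun z => x ≤ z ∧ z ≤ m)
              ((Ps 0).roots.toFinset.filter fun z => m ≤ z ∧ z ≤ y) := by
            rw [Finset.disjoint_left]
            intro z hz1 hz2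
            obtain ⟨hz, h1, h2⟩ := Finset.mem_filter.mp hz1
            obtain ⟨_, h3, _⟩ := Finset.mem_filter.mp hz2
            have : z = m := le_antisymm h2 h3
            subst this
            exact hm 0 n.zero_le ((Polynomial.mem_roots (hPsne 0 n.zero_le)).mp (Multiset.mem_toFinset.mp hz))
          rw [hunion, Finset.card_union_of_disjoint hdisj]
          push_cast
          linarith
  rw [← hP0]
  exact main (crit a b).card a b hab ha hb (le_refl _)
end

section
/- Jacobi–Hermite theorem: let P ∈ ℝ[X] be monic of degree n with n distinct complex roots. The number of real roots of P equals the signature of the n×n Hankel matrix S(P) with entries S(P)_{ij} = σ_{i+j−2}, where σ_k is the sum of k-th powers of all roots of P (equivalently σ_k = trace(C(P)^k) for the companion matrix C(P)). -/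
open Matrix

/-- The companion matrix of a monic polynomial of degree `n`: ones on the subdiagonal and
the negated coefficients in the last column. -/
def companionMatrix (n : ℕ) (p : Polynomial ℝ) : Matrix (Fin n) (Fin n) ℝ :=
  Matrix.of fun i j =>
    if (j : ℕ) = n - 1 then -p.coeff i
    else if (i : ℕ) = (j : ℕ) + 1 then 1 else 0

/-- The Jacobi–Hermite (Hankel) matrix `S(P)` with entries `σ_{i+j}` (0-indexed), where
`σ_k = trace(C(P)^k)` is the sum of `k`-th powers of the roots of `P`. -/
noncomputable def jacobiHermiteMatrix (n : ℕ) (p : Polynomial ℝ) : Matrix (Fin n) (Fin n) ℝ :=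
  Matrix.of fun i j => Matrix.trace (companionMatrix n p ^ ((i : ℕ) + (j : ℕ)))

section Aux

open Polynomial

variable {n : ℕ}


/-- Expansion of the quadratic form in a `B`-orthogonal basis. -/
lemma quadform_expand (A : Matrix (Fin n) (Fin n) ℝ) (v : Module.Basis (Fin n) ℝ (Fin n → ℝ))
    (hv : ∀ i j, i ≠ j → v i ⬝ᵥ A *ᵥ v j = 0) (x : Fin n → ℝ) :
    x ⬝ᵥ A *ᵥ x = ∑ j, (v.repr x j) ^ 2 * (v j ⬝ᵥ A *ᵥ v j) := by
  classical
  have key : ∀ y z : Fin n → ℝ, y ⬝ᵥ A *ᵥ z = Matrix.toBilin' A y z := fun y z =>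
    (Matrix.toBilin'_apply' A y z).symm
  rw [key]
  conv_lhs => rw [← v.sum_repr x]
  rw [LinearMap.BilinForm.sum_left]
  rw [Finset.sum_congr rfl (fun i _ => LinearMap.BilinForm.sum_right _ _ _ _)]
  rw [Finset.sum_comm]
  refine Finset.sum_congr rfl fun j _ => ?_
  have : ∀ i ∈ Finset.univ, (Matrix.toBilin' A) (v.repr x i • v i) (v.repr x j • v j)
      = if i = j then v.repr x j ^ 2 * (v j ⬝ᵥ A *ᵥ v j) else 0 := by
    intro i _
    rw [LinearMap.BilinForm.smul_left, LinearMap.BilinForm.smul_right, ← key]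
    by_cases h : i = j
    · subst h; simp [pow_two]; ring
    · simp [hv i j h, if_neg h]
  rw [Finset.sum_congr rfl this, Finset.sum_ite_eq' Finset.univ j]
  simp

lemma rank_span_basis_image (v : Module.Basis (Fin n) ℝ (Fin n → ℝ)) (s : Finset (Fin n)) :
    Module.finrank ℝ (Submodule.span ℝ (v '' ↑s)) = s.card := by
  classical
  rw [show (⇑v '' ↑s) = Set.range (⇑v ∘ (Subtype.val : ↥(s : Set (Fin n)) → Fin n)) by
    rw [Set.range_comp, Subtype.range_coe]]
  rw [finrank_span_eq_card (v.linearIndependent.comp _ Subtype.val_injective)]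
  simp

lemma posCount_le (A : Matrix (Fin n) (Fin n) ℝ) (v w : Module.Basis (Fin n) ℝ (Fin n → ℝ))
    (hv : ∀ i j, i ≠ j → v i ⬝ᵥ A *ᵥ v j = 0) (hw : ∀ i j, i ≠ j → w i ⬝ᵥ A *ᵥ w j = 0) :
    (Finset.univ.filter fun i => 0 < v i ⬝ᵥ A *ᵥ v i).card
      ≤ (Finset.univ.filter fun i => 0 < w i ⬝ᵥ A *ᵥ w i).card := by
  classical
  set Sv : Finset (Fin n) := Finset.univ.filter (fun i => 0 < v i ⬝ᵥ A *ᵥ v i) with hSv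
  set Sw : Finset (Fin n) := Finset.univ.filter (fun i => 0 < w i ⬝ᵥ A *ᵥ w i) with hSw
  set Sw' : Finset (Fin n) := Finset.univ.filter (fun i => ¬ 0 < w i ⬝ᵥ A *ᵥ w i) with hSw'
  set W : Submodule ℝ (Fin n → ℝ) := Submodule.span ℝ (v '' ↑Sv) with hW
  set U : Submodule ℝ (Fin n → ℝ) := Submodule.span ℝ (w '' ↑Sw') with hU
  -- positivity on W
  have hWpos : ∀ x ∈ W, x ≠ 0 → 0 < x ⬝ᵥ A *ᵥ x := by
    intro x hx hx0
    rw [quadform_expand A v hv]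
    have hsupp := (Module.Basis.mem_span_image v).mp hx
    refine Finset.sum_pos' (fun j _ => ?_) ?_
    · by_cases hj : v.repr x j = 0
      · simp [hj]
      · have hjS : j ∈ Sv := hsupp (Finsupp.mem_support_iff.mpr hj)
        have : 0 < v j ⬝ᵥ A *ᵥ v j := (Finset.mem_filter.mp hjS).2
        positivity
    · have : v.repr x ≠ 0 := fun h => hx0 (by simpa [h] using (v.sum_repr x).symm.trans (by simp [h]))
      obtain ⟨j, hj⟩ := Finsupp.ne_iff.mp this
      refine ⟨j, Finset.mem_univ j, ?_⟩
      have hjS : j ∈ Sv := hsupp (Finsupp.mem_support_iff.mpr (by simpa using hj))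
      have h1 : 0 < v j ⬝ᵥ A *ᵥ v j := (Finset.mem_filter.mp hjS).2
      have h2 : v.repr x j ≠ 0 := by simpa using hj
      positivity
  -- nonpositivity on U
  have hUnonpos : ∀ x ∈ U, x ⬝ᵥ A *ᵥ x ≤ 0 := by
    intro x hx
    rw [quadform_expand A w hw]
    have hsupp := (Module.Basis.mem_span_image w).mp hx
    refine Finset.sum_nonpos fun j _ => ?_
    by_cases hj : w.repr x j = 0
    · simp [hj]
    · have hjS : j ∈ Sw' := hsupp (Finsupp.mem_support_iff.mpr hj)
      have : w j ⬝ᵥ A *ᵥ w j ≤ 0 := le_of_not_gt (Finset.mem_filter.mp hjS).2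
      exact mul_nonpos_of_nonneg_of_nonpos (sq_nonneg _) this
  -- trivial intersection
  have hdisj : W ⊓ U = ⊥ := by
    rw [Submodule.eq_bot_iff]
    intro x hx
    by_contra hx0
    exact absurd (hUnonpos x hx.2) (not_le.mpr (hWpos x hx.1 hx0))
  have hrankW : Module.finrank ℝ W = Sv.card := rank_span_basis_image v Sv
  have hrankU : Module.finrank ℝ U = Sw'.card := rank_span_basis_image w Sw'
  have hthis := Submodule.finrank_sup_add_finrank_inf_eq W U
  rw [hdisj, finrank_bot, hrankW, hrankU] at hthis
  have hle : Module.finrank ℝ ↥(W ⊔ U) ≤ n := by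
    simpa using Submodule.finrank_le (W ⊔ U)
  have hcards : Sw.card + Sw'.card = n := by
    simpa [hSw, hSw'] using Finset.card_filter_add_card_filter_not
      (s := (Finset.univ : Finset (Fin n))) (p := fun i => 0 < w i ⬝ᵥ A *ᵥ w i)
  omega

lemma posCount_eq (A : Matrix (Fin n) (Fin n) ℝ) (v w : Module.Basis (Fin n) ℝ (Fin n → ℝ))
    (hv : ∀ i j, i ≠ j → v i ⬝ᵥ A *ᵥ v j = 0) (hw : ∀ i j, i ≠ j → w i ⬝ᵥ A *ᵥ w j = 0) :
    (Finset.univ.filter fun i => 0 < v i ⬝ᵥ A *ᵥ v i).card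
      = (Finset.univ.filter fun i => 0 < w i ⬝ᵥ A *ᵥ w i).card :=
  le_antisymm (posCount_le A v w hv hw) (posCount_le A w v hw hv)

lemma eigenBasis_exists (S : Matrix (Fin n) (Fin n) ℝ) (hS : S.IsHermitian) :
    ∃ v : Module.Basis (Fin n) ℝ (Fin n → ℝ),
      (∀ i j, i ≠ j → v i ⬝ᵥ S *ᵥ v j = 0) ∧ (∀ i, v i ⬝ᵥ S *ᵥ v i = hS.eigenvalues i) := by
  classical
  refine ⟨(hS.eigenvectorBasis.toBasis).map (WithLp.linearEquiv 2 ℝ (Fin n → ℝ)), ?_, ?_⟩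
  · intro i j hij
    have happ : ∀ k, ((hS.eigenvectorBasis.toBasis).map (WithLp.linearEquiv 2 ℝ (Fin n → ℝ))) k
        = ⇑(hS.eigenvectorBasis k) := by
      intro k; simp [Module.Basis.map_apply]
    rw [happ, happ, hS.mulVec_eigenvectorBasis, dotProduct_smul]
    have := (orthonormal_iff_ite (𝕜 := ℝ)).mp hS.eigenvectorBasis.orthonormal i j
    rw [if_neg hij] at this
    have hdot : ⇑(hS.eigenvectorBasis i) ⬝ᵥ ⇑(hS.eigenvectorBasis j) = 0 := by
      rw [← this, PiLp.inner_apply]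
      simp [dotProduct, RCLike.inner_apply]
      exact Finset.sum_congr rfl fun _ _ => mul_comm _ _
    rw [hdot]; simp
  · intro i
    have happ : ∀ k, ((hS.eigenvectorBasis.toBasis).map (WithLp.linearEquiv 2 ℝ (Fin n → ℝ))) k
        = ⇑(hS.eigenvectorBasis k) := by
      intro k; simp [Module.Basis.map_apply]
    rw [happ, hS.mulVec_eigenvectorBasis, dotProduct_smul]
    have := (orthonormal_iff_ite (𝕜 := ℝ)).mp hS.eigenvectorBasis.orthonormal i i
    rw [if_pos rfl] at this
    have hdot : ⇑(hS.eigenvectorBasis i) ⬝ᵥ ⇑(hS.eigenvectorBasis i) = 1 := by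
      rw [← this, PiLp.inner_apply]
      simp [dotProduct, RCLike.inner_apply]
      simp only [pow_two]
    rw [hdot]; simp

lemma matrixSignature_eq_of_orth_basis (S : Matrix (Fin n) (Fin n) ℝ) (hS : S.IsHermitian)
    (w : Module.Basis (Fin n) ℝ (Fin n → ℝ)) (hw : ∀ i j, i ≠ j → w i ⬝ᵥ S *ᵥ w j = 0) :
    (if h : S.IsHermitian then
      ((Finset.univ.filter fun i => 0 < h.eigenvalues i).card : ℤ)
        - ((Finset.univ.filter fun i => h.eigenvalues i < 0).card : ℤ)
    else 0)
    = ((Finset.univ.filter fun i => 0 < w i ⬝ᵥ S *ᵥ w i).card : ℤ)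
      - ((Finset.univ.filter fun i => w i ⬝ᵥ S *ᵥ w i < 0).card : ℤ) := by
  classical
  rw [dif_pos hS]
  obtain ⟨v, hv, hval⟩ := eigenBasis_exists S hS
  have hneg_orth_v : ∀ i j, i ≠ j → v i ⬝ᵥ (-S) *ᵥ v j = 0 := by
    intro i j hij; rw [Matrix.neg_mulVec, dotProduct_neg, hv i j hij, neg_zero]
  have hneg_orth_w : ∀ i j, i ≠ j → w i ⬝ᵥ (-S) *ᵥ w j = 0 := by
    intro i j hij; rw [Matrix.neg_mulVec, dotProduct_neg, hw i j hij, neg_zero]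
  have hpos : (Finset.univ.filter fun i => 0 < hS.eigenvalues i).card
      = (Finset.univ.filter fun i => 0 < w i ⬝ᵥ S *ᵥ w i).card := by
    rw [← posCount_eq S v w hv hw]
    congr 1
    exact Finset.filter_congr fun i _ => by rw [hval i]
  have hneg : (Finset.univ.filter fun i => hS.eigenvalues i < 0).card
      = (Finset.univ.filter fun i => w i ⬝ᵥ S *ᵥ w i < 0).card := by
    have := posCount_eq (-S) v w hneg_orth_v hneg_orth_w
    have hv' : ∀ i, v i ⬝ᵥ (-S) *ᵥ v i = -(hS.eigenvalues i) := by
      intro i; rw [Matrix.neg_mulVec, dotProduct_neg, hval i]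
    have hw' : ∀ i, w i ⬝ᵥ (-S) *ᵥ w i = -(w i ⬝ᵥ S *ᵥ w i) := by
      intro i; rw [Matrix.neg_mulVec, dotProduct_neg]
    calc (Finset.univ.filter fun i => hS.eigenvalues i < 0).card
        = (Finset.univ.filter fun i => 0 < v i ⬝ᵥ (-S) *ᵥ v i).card := by
          congr 1; exact Finset.filter_congr fun i _ => by rw [hv' i]; simp [neg_pos]
      _ = (Finset.univ.filter fun i => 0 < w i ⬝ᵥ (-S) *ᵥ w i).card := this
      _ = (Finset.univ.filter fun i => w i ⬝ᵥ S *ᵥ w i < 0).card := by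
          congr 1; exact Finset.filter_congr fun i _ => by rw [hw' i]; simp [neg_pos]
  rw [hpos, hneg]

lemma signature_congruent_diagonal {n : ℕ} (S M : Matrix (Fin n) (Fin n) ℝ) (d : Fin n → ℝ)
    (hS : S.IsHermitian) (hdet : IsUnit M.det) (hfact : Mᵀ * Matrix.diagonal d * M = S) :
    (if h : S.IsHermitian then
      ((Finset.univ.filter fun i => 0 < h.eigenvalues i).card : ℤ)
        - ((Finset.univ.filter fun i => h.eigenvalues i < 0).card : ℤ)
    else 0)
    = ((Finset.univ.filter fun i => 0 < d i).card : ℤ)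
      - ((Finset.univ.filter fun i => d i < 0).card : ℤ) := by
  classical
  have hinv : Invertible M := M.invertibleOfIsUnitDet hdet
  set w : Module.Basis (Fin n) ℝ (Fin n → ℝ) :=
    (Pi.basisFun ℝ (Fin n)).map (M.toLinearEquiv' hinv).symm with hw
  have hMw : ∀ i, M *ᵥ w i = Pi.single i 1 := by
    intro i
    have : w i = (M.toLinearEquiv' hinv).symm (Pi.single i 1) := by
      rw [hw, Module.Basis.map_apply, Pi.basisFun_apply]
    rw [this]
    have h3 : ∀ x, (M.toLinearEquiv' hinv) x = M *ᵥ x := fun x => by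
      rw [← Matrix.toLin'_apply M x]; rfl
    rw [← h3, (M.toLinearEquiv' hinv).apply_symm_apply]
  have hBval : ∀ i j, w i ⬝ᵥ S *ᵥ w j = (if i = j then d i else 0) := by
    intro i j
    rw [← hfact, Matrix.mul_assoc, ← Matrix.mulVec_mulVec, ← Matrix.mulVec_mulVec,
      hMw j, Matrix.diagonal_mulVec_single, Matrix.dotProduct_mulVec, Matrix.vecMul_transpose,
      hMw i, single_dotProduct, one_mul, Pi.single_apply]
    by_cases h : i = j <;> simp [h]
  have horth : ∀ i j, i ≠ j → w i ⬝ᵥ S *ᵥ w j = 0 := by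
    intro i j hij; rw [hBval, if_neg hij]
  rw [matrixSignature_eq_of_orth_basis S hS w horth]
  congr 2
  · congr 1; exact Finset.filter_congr fun i _ => by rw [hBval, if_pos rfl]
  · congr 1; exact Finset.filter_congr fun i _ => by rw [hBval, if_pos rfl]
lemma vandermonde_mul_companion {n : ℕ} (P : Polynomial ℝ) (hm : P.Monic)
    (hdeg : P.natDegree = n) (α : Fin n → ℂ)
    (hroot : ∀ k, (P.map (algebraMap ℝ ℂ)).eval (α k) = 0) :
    Matrix.vandermonde α * (companionMatrix n P).map (algebraMap ℝ ℂ)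
      = Matrix.diagonal α * Matrix.vandermonde α := by
  ext k j
  rw [Matrix.mul_apply, Matrix.diagonal_mul, Matrix.vandermonde_apply]
  have hn : 0 < n := j.pos
  by_cases hj : (j : ℕ) = n - 1
  · -- last column
    have hndeg : (P.map (algebraMap ℝ ℂ)).natDegree = n := by
      rw [hm.natDegree_map, hdeg]
    have heval := hroot k
    rw [Polynomial.eval_eq_sum_range, hndeg, Finset.sum_range_succ] at heval
    have hlead : (P.map (algebraMap ℝ ℂ)).coeff n = 1 := by
      rw [← hndeg]; exact (hm.map (algebraMap ℝ ℂ)).coeff_natDegree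
    rw [hlead, one_mul] at heval
    have hsum : ∑ i ∈ Finset.range n, (P.map (algebraMap ℝ ℂ)).coeff i * α k ^ i
        = -(α k ^ n) := eq_neg_of_add_eq_zero_left heval
    calc ∑ i : Fin n, vandermonde α k i * (companionMatrix n P).map (algebraMap ℝ ℂ) i j
        = ∑ i : Fin n, -((P.map (algebraMap ℝ ℂ)).coeff (i : ℕ) * α k ^ (i : ℕ)) := by
          refine Finset.sum_congr rfl fun i _ => ?_
          simp [companionMatrix, Matrix.map_apply, hj, Matrix.vandermonde_apply,
            Polynomial.coeff_map]
          ring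
      _ = -∑ i ∈ Finset.range n, ((P.map (algebraMap ℝ ℂ)).coeff i * α k ^ i) := by
          rw [← Finset.sum_range fun i => -((P.map (algebraMap ℝ ℂ)).coeff i * α k ^ i),
            Finset.sum_neg_distrib]
      _ = α k ^ n := by rw [hsum, neg_neg]
      _ = α k * α k ^ (j : ℕ) := by
          rw [hj, ← pow_succ']
          congr 1
          omega
  · have hjlt : (j : ℕ) + 1 < n := by
      have := j.isLt; omega
    rw [Finset.sum_eq_single (⟨(j : ℕ) + 1, hjlt⟩ : Fin n)]
    · simp [companionMatrix, Matrix.map_apply, hj, pow_succ, mul_comm]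
    · intro i _ hi
      have : (i : ℕ) ≠ (j : ℕ) + 1 := fun h => hi (Fin.ext h)
      simp [companionMatrix, Matrix.map_apply, hj, this]
    · intro h; exact absurd (Finset.mem_univ _) h

lemma trace_companion_pow {n : ℕ} (P : Polynomial ℝ) (hm : P.Monic)
    (hdeg : P.natDegree = n) (α : Fin n → ℂ) (hinj : Function.Injective α)
    (hroot : ∀ k, (P.map (algebraMap ℝ ℂ)).eval (α k) = 0) (m : ℕ) :
    ((Matrix.trace (companionMatrix n P ^ m) : ℝ) : ℂ) = ∑ k, α k ^ m := by
  classical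
  set V := Matrix.vandermonde α with hV
  set C := (companionMatrix n P).map (algebraMap ℝ ℂ) with hC
  have hdet : IsUnit V.det := by
    rw [isUnit_iff_ne_zero, hV, Matrix.det_vandermonde]
    refine Finset.prod_ne_zero_iff.mpr fun i _ => Finset.prod_ne_zero_iff.mpr fun j hj => ?_
    exact sub_ne_zero_of_ne fun h => (Finset.mem_Ioi.mp hj).ne' (hinj h)
  have hVC : V * C = Matrix.diagonal α * V := vandermonde_mul_companion P hm hdeg α hroot
  have hCeq : C = V⁻¹ * (Matrix.diagonal α * V) := by
    rw [← hVC, ← Matrix.mul_assoc, Matrix.nonsing_inv_mul V hdet, Matrix.one_mul]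
  have hCm : ∀ m : ℕ, C ^ m = V⁻¹ * Matrix.diagonal α ^ m * V := by
    intro m
    induction m with
    | zero => rw [pow_zero, pow_zero, Matrix.mul_one, Matrix.nonsing_inv_mul V hdet]
    | succ m ih =>
      rw [pow_succ, ih, hCeq, pow_succ]
      rw [Matrix.mul_assoc (V⁻¹ * Matrix.diagonal α ^ m) V _, ← Matrix.mul_assoc V V⁻¹ _,
        Matrix.mul_nonsing_inv V hdet, Matrix.one_mul]
      simp only [Matrix.mul_assoc]
  have hmapC : ((companionMatrix n P) ^ m).map (algebraMap ℝ ℂ) = C ^ m := by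
    rw [hC]
    exact map_pow ((algebraMap ℝ ℂ).mapMatrix) (companionMatrix n P) m
  have htr : ((Matrix.trace (companionMatrix n P ^ m) : ℝ) : ℂ)
      = Matrix.trace (C ^ m) := by
    rw [← hmapC]
    exact AddMonoidHom.map_trace (algebraMap ℝ ℂ) (companionMatrix n P ^ m)
  rw [htr, hCm m, Matrix.trace_mul_cycle, Matrix.mul_nonsing_inv V hdet, Matrix.one_mul,
    Matrix.diagonal_pow, Matrix.trace_diagonal]
  simp [Pi.pow_apply]

end Aux

/-- Jacobi–Hermite theorem: for `P` monic of degree `n` with distinct complex roots, the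
number of real roots of `P` equals the signature of the Hankel matrix
`S(P) = (σ_{i+j−2})` of power sums of the roots. -/
theorem jacobi_hermite (n : ℕ) (P : Polynomial ℝ) (hm : P.Monic) (hdeg : P.natDegree = n)
    (hsep : ((P.map (algebraMap ℝ ℂ)).roots).Nodup) :
    (P.roots.toFinset.card : ℤ) = matrixSignature (jacobiHermiteMatrix n P) := by
  classical
  set Pm := P.map (algebraMap ℝ ℂ) with hPmdef
  have hPm_monic : Pm.Monic := hm.map _
  have hPmne : Pm ≠ 0 := hPm_monic.ne_zero
  have hndeg : Pm.natDegree = n := by rw [hPmdef, hm.natDegree_map, hdeg]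
  have hcard : Pm.roots.toFinset.card = n := by
    rw [Multiset.toFinset_card_of_nodup hsep,
      (Polynomial.splits_iff_card_roots).mp (IsAlgClosed.splits Pm), hndeg]
  -- enumeration of complex roots
  set e : Fin n ≃ {x // x ∈ Pm.roots.toFinset} :=
    (finCongr hcard.symm).trans Pm.roots.toFinset.equivFin.symm with he
  set α : Fin n → ℂ := fun k => (e k : ℂ) with hα
  have hα_inj : Function.Injective α := fun a b hab => e.injective (Subtype.ext hab)
  have hα_mem : ∀ k, α k ∈ Pm.roots := fun k => Multiset.mem_toFinset.mp (e k).2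
  have hroot : ∀ k, Pm.eval (α k) = 0 := fun k =>
    (Polynomial.mem_roots hPmne).mp (hα_mem k)
  have hα_surj : ∀ z ∈ Pm.roots, ∃ k, α k = z := by
    intro z hz
    exact ⟨e.symm ⟨z, Multiset.mem_toFinset.mpr hz⟩, by simp [hα, he]⟩
  -- conjugation stability
  have hconj_mem : ∀ z ∈ Pm.roots, (starRingEnd ℂ) z ∈ Pm.roots := by
    intro z hz
    have h1 : Pm.map (starRingEnd ℂ) = Pm := by
      rw [hPmdef, Polynomial.map_map]
      congr 1
      exact RingHom.ext fun x => by simp [Complex.conj_ofReal]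
    have h2 : (Pm.map (starRingEnd ℂ)).roots = Pm.roots.map (starRingEnd ℂ) :=
      (IsAlgClosed.splits Pm).roots_map _
    rw [h1] at h2
    rw [h2]
    exact Multiset.mem_map_of_mem _ hz
  -- the conjugation involution
  set τ : Fin n → Fin n := fun k =>
    e.symm ⟨(starRingEnd ℂ) (α k), Multiset.mem_toFinset.mpr (hconj_mem _ (hα_mem k))⟩ with hτ
  have hτα : ∀ k, α (τ k) = (starRingEnd ℂ) (α k) := by
    intro k; simp [hτ, hα]
  have hττ : ∀ k, τ (τ k) = k := by
    intro k; apply hα_inj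
    rw [hτα, hτα, Complex.conj_conj]
  have hτfix : ∀ k, τ k = k ↔ (α k).im = 0 := by
    intro k
    rw [← Complex.conj_eq_iff_im, ← hτα]
    exact ⟨fun h => by rw [h], fun h => hα_inj h⟩
  -- number of real roots = number of fixed points of τ
  have hPne : P ≠ 0 := hm.ne_zero
  have hevalR : ∀ x : ℝ, Pm.eval (x : ℂ) = ((P.eval x : ℝ) : ℂ) := by
    intro x
    rw [hPmdef, Polynomial.eval_map]
    exact Polynomial.eval₂_at_apply (algebraMap ℝ ℂ) x
  have hfixcount : (Finset.univ.filter fun k => τ k = k).card = P.roots.toFinset.card := by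
    refine Finset.card_bij (fun k _ => (α k).re) ?_ ?_ ?_
    · intro k hk
      rw [Finset.mem_filter] at hk
      have him : (α k).im = 0 := (hτfix k).mp hk.2
      have hre : (((α k).re : ℝ) : ℂ) = α k := Complex.ext (by simp) (by simp [him])
      rw [Multiset.mem_toFinset, Polynomial.mem_roots hPne]
      have := hroot k
      rw [← hre, hevalR] at this
      exact_mod_cast this
    · intro a ha b hb hab
      rw [Finset.mem_filter] at ha hb
      have hima : (α a).im = 0 := (hτfix a).mp ha.2
      have himb : (α b).im = 0 := (hτfix b).mp hb.2
      exact hα_inj (Complex.ext hab (by rw [hima, himb]))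
    · intro a ha
      rw [Multiset.mem_toFinset, Polynomial.mem_roots hPne] at ha
      have hmem : ((a : ℝ) : ℂ) ∈ Pm.roots := by
        rw [Polynomial.mem_roots hPmne]
        show Pm.eval _ = 0
        rw [hevalR, ha]
        simp
      obtain ⟨k, hk⟩ := hα_surj _ hmem
      have him : (α k).im = 0 := by rw [hk]; simp
      exact ⟨k, Finset.mem_filter.mpr ⟨Finset.mem_univ _, (hτfix k).mpr him⟩, by simp [hk]⟩
  -- the matrices
  set d : Fin n → ℝ := fun k => if τ k = k then 1 else if τ k < k then -2 else 2 with hd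
  set M : Matrix (Fin n) (Fin n) ℝ :=
    Matrix.of (fun k i => if τ k < k then (α k ^ (i : ℕ)).im else (α k ^ (i : ℕ)).re) with hM
  set S := jacobiHermiteMatrix n P with hS
  have hS_entry : ∀ i j : Fin n, ((S i j : ℝ) : ℂ) = ∑ k, α k ^ ((i : ℕ) + (j : ℕ)) := by
    intro i j
    rw [hS, jacobiHermiteMatrix, Matrix.of_apply]
    exact trace_companion_pow P hm hdeg α hα_inj hroot _
  have hS_herm : S.IsHermitian := by
    show Sᴴ = S
    ext i j
    simp only [hS, Matrix.conjTranspose_apply, jacobiHermiteMatrix, Matrix.of_apply, star_trivial]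
    rw [Nat.add_comm]
  -- entry facts about M and d
  have hrow_re : ∀ k, ¬ τ k < k → ∀ m : Fin n, M k m = (α k ^ (m : ℕ)).re := by
    intro k hk m; simp [hM, Matrix.of_apply, if_neg hk]
  have hrow_im : ∀ k, τ k < k → ∀ m : Fin n, M k m = (α k ^ (m : ℕ)).im := by
    intro k hk m; simp [hM, Matrix.of_apply, if_pos hk]
  have hconjpow : ∀ k (m : ℕ), α (τ k) ^ m = (starRingEnd ℂ) (α k ^ m) := by
    intro k m; rw [hτα, map_pow]
  have hMτrow : ∀ k, k < τ k → ∀ m : Fin n, M (τ k) m = -((α k ^ (m : ℕ)).im) := by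
    intro k hk m
    have h1 : τ (τ k) < τ k := by rw [hττ]; exact hk
    rw [hrow_im (τ k) h1 m, hconjpow k (m : ℕ), Complex.conj_im]
  have hMτrow' : ∀ k, τ k < k → ∀ m : Fin n, M (τ k) m = (α k ^ (m : ℕ)).re := by
    intro k hk m
    have h1 : ¬ τ (τ k) < τ k := by rw [hττ]; exact asymm hk
    rw [hrow_re (τ k) h1 m, hconjpow k (m : ℕ), Complex.conj_re]
  have hfixreal : ∀ k, τ k = k → ∀ m : ℕ, (((α k ^ m).re : ℝ) : ℂ) = α k ^ m := by
    intro k hk m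
    have him : (α k).im = 0 := (hτfix k).mp hk
    have hc : (starRingEnd ℂ) (α k ^ m) = α k ^ m := by
      rw [map_pow, Complex.conj_eq_iff_im.mpr him]
    have him' : (α k ^ m).im = 0 := Complex.conj_eq_iff_im.mp hc
    exact Complex.ext (by simp) (by simp [him'])
  have hd_fix : ∀ k, τ k = k → d k = 1 := by intro k hk; simp [hd, hk]
  have hd_lt : ∀ k, k < τ k → d k = 2 := by
    intro k hk; simp [hd, if_neg hk.ne', if_neg (asymm hk)]
  have hd_gt : ∀ k, τ k < k → d k = -2 := by
    intro k hk; simp [hd, if_neg hk.ne, if_pos hk]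
  -- the real congruence
  have hfact : Mᵀ * Matrix.diagonal d * M = S := by
    ext i j
    apply Complex.ofReal_injective
    have hL : (Mᵀ * Matrix.diagonal d * M) i j = ∑ k, M k i * d k * M k j := by
      rw [Matrix.mul_apply]
      refine Finset.sum_congr rfl fun k _ => ?_
      rw [Matrix.mul_diagonal, Matrix.transpose_apply]
    rw [hL, hS_entry i j]
    push_cast
    rw [← sub_eq_zero, ← Finset.sum_sub_distrib]
    have hzero_fix : ∀ k, τ k = k →
        ((M k i : ℝ) : ℂ) * ((d k : ℝ) : ℂ) * ((M k j : ℝ) : ℂ)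
          - α k ^ ((i : ℕ) + (j : ℕ)) = 0 := by
      intro k hk
      have hnlt : ¬ τ k < k := by rw [hk]; exact lt_irrefl k
      rw [hrow_re k hnlt i, hrow_re k hnlt j, hd_fix k hk, hfixreal k hk, hfixreal k hk,
        pow_add]
      push_cast
      ring
    have hpair : ∀ k, k < τ k →
        (((M k i : ℝ) : ℂ) * ((d k : ℝ) : ℂ) * ((M k j : ℝ) : ℂ)
            - α k ^ ((i : ℕ) + (j : ℕ)))
        + (((M (τ k) i : ℝ) : ℂ) * ((d (τ k) : ℝ) : ℂ) * ((M (τ k) j : ℝ) : ℂ)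
            - α (τ k) ^ ((i : ℕ) + (j : ℕ))) = 0 := by
      intro k hk
      have hd2 : d (τ k) = -2 := hd_gt (τ k) (by rw [hττ]; exact hk)
      rw [hrow_re k (asymm hk) i, hrow_re k (asymm hk) j, hMτrow k hk i, hMτrow k hk j,
        hd_lt k hk, hd2, hconjpow k ((i : ℕ) + (j : ℕ))]
      have hre : (α k ^ ((i : ℕ) + (j : ℕ))).re
          = (α k ^ (i : ℕ)).re * (α k ^ (j : ℕ)).re
            - (α k ^ (i : ℕ)).im * (α k ^ (j : ℕ)).im := by
        rw [pow_add, Complex.mul_re]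
      have h1 : (starRingEnd ℂ) (α k ^ ((i : ℕ) + (j : ℕ)))
          = ((2 * ((α k ^ (i : ℕ)).re * (α k ^ (j : ℕ)).re
              - (α k ^ (i : ℕ)).im * (α k ^ (j : ℕ)).im) : ℝ) : ℂ)
            - α k ^ ((i : ℕ) + (j : ℕ)) := by
        rw [← hre, ← Complex.add_conj]; ring
      rw [h1]
      push_cast
      ring
    refine Finset.sum_ninvolution τ ?_ ?_ (fun k => Finset.mem_univ _) hττ
    · intro k
      rcases lt_trichotomy k (τ k) with h | h | h
      · exact hpair k h
      · rw [← h, hzero_fix k h.symm, add_zero]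
      · have hp := hpair (τ k) (by rw [hττ]; exact h)
        rw [hττ] at hp
        rw [add_comm]; exact hp
    · intro k hne hfix
      exact hne (hzero_fix k hfix)
  have hdetM : IsUnit M.det := by
    set Mc := M.map (algebraMap ℝ ℂ) with hMc
    set Q : Matrix (Fin n) (Fin n) ℂ := Matrix.of fun k l =>
      if l = k then (if τ k < k then Complex.I else 1)
      else if l = τ k then (if k < τ k then -Complex.I else 1) else 0 with hQ
    have hQM : Q * Mc = Matrix.vandermonde α := by
      ext k j
      rw [Matrix.mul_apply, Matrix.vandermonde_apply]
      have hMcval : ∀ l m, Mc l m = ((M l m : ℝ) : ℂ) := fun l m => by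
        simp [hMc, Matrix.map_apply]
      by_cases hfix : τ k = k
      · rw [Finset.sum_eq_single k]
        · have hnlt : ¬ τ k < k := by rw [hfix]; exact lt_irrefl k
          rw [hMcval, hrow_re k hnlt j, hfixreal k hfix]
          simp [hQ, Matrix.of_apply, if_neg hnlt]
        · intro l _ hl
          have hl2 : l ≠ τ k := by rw [hfix]; exact hl
          simp [hQ, Matrix.of_apply, if_neg hl, if_neg hl2]
        · intro h; exact absurd (Finset.mem_univ _) h
      · have hne : k ≠ τ k := fun h => hfix h.symm
        rw [← Finset.sum_subset (Finset.subset_univ {k, τ k}) (by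
          intro l _ hl
          rw [Finset.mem_insert, Finset.mem_singleton] at hl
          push_neg at hl
          simp [hQ, Matrix.of_apply, if_neg hl.1, if_neg hl.2])]
        rw [Finset.sum_pair hne]
        rcases lt_or_gt_of_ne hne with h | h
        · rw [hMcval, hMcval, hrow_re k (asymm h) j, hMτrow k h j]
          simp only [hQ, Matrix.of_apply, if_pos rfl, if_neg (asymm h), if_neg hne.symm,
            if_pos h]
          conv_rhs => rw [← Complex.re_add_im (α k ^ (j : ℕ))]
          push_cast
          ring
        · rw [hMcval, hMcval, hrow_im k h j, hMτrow' k h j]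
          simp only [hQ, Matrix.of_apply, if_pos rfl, if_pos h, if_neg hne.symm,
            if_neg (asymm h)]
          conv_rhs => rw [← Complex.re_add_im (α k ^ (j : ℕ))]
          push_cast
          ring
    have hVdet : IsUnit (Matrix.vandermonde α).det := by
      rw [isUnit_iff_ne_zero, Matrix.det_vandermonde]
      refine Finset.prod_ne_zero_iff.mpr fun a _ => Finset.prod_ne_zero_iff.mpr fun b hb => ?_
      exact sub_ne_zero_of_ne fun h => (Finset.mem_Ioi.mp hb).ne' (hα_inj h)
    have h1 : Q.det * Mc.det = (Matrix.vandermonde α).det := by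
      rw [← Matrix.det_mul, hQM]
    have h2 : Mc.det ≠ 0 := by
      intro h0
      rw [h0, mul_zero] at h1
      exact (isUnit_iff_ne_zero.mp hVdet) h1.symm
    have h3 : Mc.det = ((M.det : ℝ) : ℂ) := (RingHom.map_det (algebraMap ℝ ℂ) M).symm
    rw [isUnit_iff_ne_zero]
    intro h0
    rw [h3, h0] at h2
    exact h2 (by push_cast; ring)
  -- signature computation
  have hsig : matrixSignature S
      = ((Finset.univ.filter fun i => 0 < d i).card : ℤ)
        - ((Finset.univ.filter fun i => d i < 0).card : ℤ) := by
    rw [show matrixSignature S = _ from rfl]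
    exact signature_congruent_diagonal S M d hS_herm hdetM hfact
  -- counting
  have hposd : (Finset.univ.filter fun i => 0 < d i)
      = (Finset.univ.filter fun k => τ k = k) ∪ (Finset.univ.filter fun k => k < τ k) := by
    rw [← Finset.filter_or]
    refine Finset.filter_congr fun k _ => ?_
    rw [hd]
    rcases lt_trichotomy (τ k) k with h | h | h
    · simp [if_neg h.ne, if_pos h, h.ne, not_lt_of_gt h]
    · simp [h]
    · simp [if_neg h.ne', if_neg (not_lt_of_gt h), h]
  have hnegd : (Finset.univ.filter fun i => d i < 0)
      = (Finset.univ.filter fun k => τ k < k) := by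
    refine Finset.filter_congr fun k _ => ?_
    rw [hd]
    rcases lt_trichotomy (τ k) k with h | h | h
    · simp [if_neg h.ne, if_pos h, h]
    · simp [h]
    · simp [if_neg h.ne', if_neg (not_lt_of_gt h), not_lt_of_gt h]
  have hLG : (Finset.univ.filter fun k => k < τ k).card
      = (Finset.univ.filter fun k => τ k < k).card := by
    refine Finset.card_bij (fun k _ => τ k) ?_ ?_ ?_
    · intro k hk
      rw [Finset.mem_filter] at hk ⊢
      exact ⟨Finset.mem_univ _, by rw [hττ]; exact hk.2⟩
    · intro a ha b hb hab
      have := congrArg τ hab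
      rwa [hττ, hττ] at this
    · intro z hz
      rw [Finset.mem_filter] at hz
      exact ⟨τ z, Finset.mem_filter.mpr ⟨Finset.mem_univ _, by rw [hττ]; exact hz.2⟩, hττ z⟩
  have hdisj : Disjoint (Finset.univ.filter fun k => τ k = k)
      (Finset.univ.filter fun k => k < τ k) := by
    rw [Finset.disjoint_filter]
    intro k _ hk
    rw [hk]; exact lt_irrefl k
  rw [hsig, hposd, hnegd, Finset.card_union_of_disjoint hdisj, hfixcount]
  push_cast
  rw [← hLG]
  ring
end

section
/- Sublagrangian reduction for signatures: if (V, φ) is a nonsingular symmetric form over ℝ and L ⊆ V is an isotropic subspace (φ vanishes on L × L), then the induced symmetric form on L^⊥/L is nonsingular and has the same signature as (V, φ): τ(L^⊥/L, [φ]) = τ(V, φ). -/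
open Matrix

/-- The signature of a (symmetric) bilinear form on a finite-dimensional real vector
space, computed from its Gram matrix in some basis (well defined by Sylvester's law of
inertia). -/
noncomputable def bilinSignature {V : Type} [AddCommGroup V] [Module ℝ V]
    [FiniteDimensional ℝ V] (B : LinearMap.BilinForm ℝ V) : ℤ :=
  matrixSignature (Matrix.of fun i j : Fin (Module.finrank ℝ V) =>
    B (Module.finBasis ℝ V i) (Module.finBasis ℝ V j))

open Module Submodule

/-- `B` is positive definite on the submodule `U`. -/
def PosDefOn {V : Type*} [AddCommGroup V] [Module ℝ V] (B : LinearMap.BilinForm ℝ V)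
    (U : Submodule ℝ V) : Prop :=
  ∀ x ∈ U, x ≠ 0 → 0 < B x x

/-- `m` is the maximal dimension of a subspace on which `B` is positive definite. -/
def IsMaxPos {V : Type*} [AddCommGroup V] [Module ℝ V] [FiniteDimensional ℝ V]
    (B : LinearMap.BilinForm ℝ V) (m : ℕ) : Prop :=
  (∃ U : Submodule ℝ V, PosDefOn B U ∧ Module.finrank ℝ U = m) ∧
  ∀ U : Submodule ℝ V, PosDefOn B U → Module.finrank ℝ U ≤ m

lemma IsMaxPos.unique {V : Type*} [AddCommGroup V] [Module ℝ V] [FiniteDimensional ℝ V]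
    {B : LinearMap.BilinForm ℝ V} {m m' : ℕ} (h : IsMaxPos B m) (h' : IsMaxPos B m') :
    m = m' := by
  obtain ⟨⟨U, hU, hUr⟩, hb⟩ := h
  obtain ⟨⟨U', hU', hUr'⟩, hb'⟩ := h'
  have h1 := hb' U hU
  have h2 := hb U' hU'
  omega

lemma bilin_sum_sum {V : Type*} [AddCommGroup V] [Module ℝ V]
    (B : LinearMap.BilinForm ℝ V) {ι : Type*} [Fintype ι] (v : ι → V) (a b : ι → ℝ) :
    B (∑ i, a i • v i) (∑ j, b j • v j) = ∑ i, ∑ j, a i * b j * B (v i) (v j) := by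
  rw [LinearMap.BilinForm.sum_left]
  refine Finset.sum_congr rfl fun i _ => ?_
  rw [LinearMap.BilinForm.sum_right]
  refine Finset.sum_congr rfl fun j _ => ?_
  rw [LinearMap.BilinForm.smul_left, LinearMap.BilinForm.smul_right]
  ring

lemma bilin_diag_sum {V : Type*} [AddCommGroup V] [Module ℝ V]
    (B : LinearMap.BilinForm ℝ V) {ι : Type*} [Fintype ι] [DecidableEq ι] (v : ι → V)
    (w : ι → ℝ) (hd : ∀ i j, B (v i) (v j) = if i = j then w i else 0) (a : ι → ℝ) :
    B (∑ i, a i • v i) (∑ j, a j • v j) = ∑ i, a i * a i * w i := by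
  rw [bilin_sum_sum]
  refine Finset.sum_congr rfl fun i _ => ?_
  rw [Finset.sum_eq_single i]
  · rw [hd, if_pos rfl]
  · intro j _ hj
    rw [hd, if_neg (Ne.symm hj), mul_zero]
  · simp

/-- If `B` is diagonal in some basis, the number of positive weights is the maximal
dimension of a positive definite subspace. -/
lemma isMaxPos_of_diag {V : Type*} [AddCommGroup V] [Module ℝ V] [FiniteDimensional ℝ V]
    (B : LinearMap.BilinForm ℝ V) {n : ℕ} (c : Basis (Fin n) ℝ V) (w : Fin n → ℝ)
    (hd : ∀ i j, B (c i) (c j) = if i = j then w i else 0) :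
    IsMaxPos B (Finset.univ.filter fun i => 0 < w i).card := by
  classical
  set P : Finset (Fin n) := Finset.univ.filter fun i => 0 < w i with hP
  have hnV : Module.finrank ℝ V = n := by
    rw [finrank_eq_card_basis c, Fintype.card_fin]
  constructor
  · -- existence
    refine ⟨span ℝ (Set.range fun i : {i // i ∈ P} => c i), ?_, ?_⟩
    · intro x hx hx0
      obtain ⟨a, ha⟩ := (mem_span_range_iff_exists_fun ℝ).mp hx
      have hdiag : ∀ (i j : {i // i ∈ P}), B (c i) (c j) = if i = j then w i else 0 := by
        intro i j
        rw [hd]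
        by_cases h : i = j
        · simp [h]
        · rw [if_neg h, if_neg (fun hc => h (Subtype.ext hc))]
      rw [← ha, bilin_diag_sum B _ _ hdiag]
      have hane : ∃ i, a i ≠ 0 := by
        by_contra hcon
        push_neg at hcon
        apply hx0
        rw [← ha]
        simp [hcon]
      obtain ⟨i0, hi0⟩ := hane
      refine Finset.sum_pos' (fun i _ => ?_) ⟨i0, Finset.mem_univ _, ?_⟩
      · have : 0 < w i := (Finset.mem_filter.mp i.2).2
        exact mul_nonneg (mul_self_nonneg _) this.le
      · have hw : 0 < w i0 := (Finset.mem_filter.mp i0.2).2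
        exact mul_pos (mul_self_pos.mpr hi0) hw
    · have hli : LinearIndependent ℝ (fun i : {i // i ∈ P} => c i) :=
        c.linearIndependent.comp _ Subtype.val_injective
      rw [finrank_span_eq_card hli, Fintype.card_coe]
  · -- bound
    intro U hU
    set Q : Finset (Fin n) := Finset.univ.filter fun i => ¬ 0 < w i with hQ
    set N : Submodule ℝ V := span ℝ (Set.range fun i : {i // i ∈ Q} => c i) with hN
    have hNrank : Module.finrank ℝ N = Q.card := by
      have hli : LinearIndependent ℝ (fun i : {i // i ∈ Q} => c i) :=
        c.linearIndependent.comp _ Subtype.val_injective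
      rw [hN, finrank_span_eq_card hli, Fintype.card_coe]
    have hNnonpos : ∀ x ∈ N, B x x ≤ 0 := by
      intro x hx
      obtain ⟨a, ha⟩ := (mem_span_range_iff_exists_fun ℝ).mp hx
      have hdiag : ∀ (i j : {i // i ∈ Q}), B (c i) (c j) = if i = j then w i else 0 := by
        intro i j
        rw [hd]
        by_cases h : i = j
        · simp [h]
        · rw [if_neg h, if_neg (fun hc => h (Subtype.ext hc))]
      rw [← ha, bilin_diag_sum B _ _ hdiag]
      refine Finset.sum_nonpos fun i _ => ?_
      have : w i ≤ 0 := le_of_not_gt (Finset.mem_filter.mp i.2).2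
      have h2 : 0 ≤ a i * a i := mul_self_nonneg _
      exact mul_nonpos_of_nonneg_of_nonpos h2 this
    have hinf : U ⊓ N = ⊥ := by
      rw [eq_bot_iff]
      intro x hx
      by_contra hx0
      have hx0' : x ≠ 0 := fun h => hx0 (h ▸ (Submodule.zero_mem ⊥))
      have h1 := hU x hx.1 hx0'
      have h2 := hNnonpos x hx.2
      · exact absurd (lt_of_lt_of_le h1 h2) (lt_irrefl 0)
    have hQcard : P.card + Q.card = n := by
      rw [hP, hQ]
      rw [Finset.card_filter_add_card_filter_not]
      exact Fintype.card_fin n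
    have hsum := finrank_sup_add_finrank_inf_eq U N
    rw [hinf, finrank_bot, add_zero, hNrank] at hsum
    have hle : Module.finrank ℝ ↥(U ⊔ N) ≤ n := hnV ▸ Submodule.finrank_le _
    omega

section Spectral
variable {V : Type} [AddCommGroup V] [Module ℝ V] [FiniteDimensional ℝ V]
  (B : LinearMap.BilinForm ℝ V)

/-- For symmetric `B`, an orthogonal basis of eigenvectors of the Gram matrix. -/
lemma exists_diag_basis (hsymm : B.IsSymm)
    (hS : (Matrix.of fun i j : Fin (Module.finrank ℝ V) =>
      B (Module.finBasis ℝ V i) (Module.finBasis ℝ V j)).IsHermitian) :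
    ∃ c : Basis (Fin (Module.finrank ℝ V)) ℝ V,
      ∀ i j, B (c i) (c j) = if i = j then hS.eigenvalues i else 0 := by
  classical
  set n := Module.finrank ℝ V
  set b := Module.finBasis ℝ V with hb
  set S : Matrix (Fin n) (Fin n) ℝ := Matrix.of fun i j => B (b i) (b j) with hSdef
  set E : EuclideanSpace ℝ (Fin n) ≃ₗ[ℝ] V :=
    (WithLp.linearEquiv 2 ℝ (Fin n → ℝ)).trans b.equivFun.symm with hE
  refine ⟨(hS.eigenvectorBasis.toBasis).map E, fun i j => ?_⟩
  have hcv : ∀ k, ((hS.eigenvectorBasis.toBasis).map E) k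
      = b.equivFun.symm (WithLp.equiv 2 _ (hS.eigenvectorBasis k)) := by
    intro k
    simp [hE, Basis.map_apply, OrthonormalBasis.coe_toBasis]
  have key : ∀ x y : Fin n → ℝ, B (b.equivFun.symm x) (b.equivFun.symm y)
      = x ⬝ᵥ S.mulVec y := by
    intro x y
    simp only [Basis.equivFun_symm_apply, LinearMap.BilinForm.sum_left,
      LinearMap.BilinForm.sum_right, LinearMap.BilinForm.smul_left,
      LinearMap.BilinForm.smul_right, dotProduct, mulVec, Finset.mul_sum]
    rw [Finset.sum_comm]
    refine Finset.sum_congr rfl fun k _ => Finset.sum_congr rfl fun l _ => ?_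
    simp only [hSdef, Matrix.of_apply]
    ring
  rw [hcv, hcv, key]
  erw [hS.mulVec_eigenvectorBasis]
  have horth := orthonormal_iff_ite.mp hS.eigenvectorBasis.orthonormal i j
  have hdot : (WithLp.equiv 2 _ (hS.eigenvectorBasis i)) ⬝ᵥ
      (WithLp.equiv 2 _ (hS.eigenvectorBasis j)) = if i = j then 1 else 0 := by
    rw [← horth, PiLp.inner_apply, dotProduct]
    simp [RCLike.inner_apply, starRingEnd_apply, mul_comm]
  erw [dotProduct_smul, hdot]
  by_cases h : i = j <;> simp [h, smul_eq_mul]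

lemma gram_isHermitian (hsymm : B.IsSymm) :
    (Matrix.of fun i j : Fin (Module.finrank ℝ V) =>
      B (Module.finBasis ℝ V i) (Module.finBasis ℝ V j)).IsHermitian := by
  ext i j
  simp only [conjTranspose_apply, Matrix.of_apply, star_trivial]
  exact hsymm.eq _ _

lemma sig_eq (hsymm : B.IsSymm) {p q : ℕ} (hp : IsMaxPos B p) (hq : IsMaxPos (-B) q) :
    bilinSignature B = (p : ℤ) - (q : ℤ) := by
  classical
  have hS := gram_isHermitian B hsymm
  obtain ⟨c, hc⟩ := exists_diag_basis B hsymm hS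
  have h1 : IsMaxPos B (Finset.univ.filter fun i => 0 < hS.eigenvalues i).card :=
    isMaxPos_of_diag B c _ hc
  have hc' : ∀ i j, (-B) (c i) (c j) = if i = j then (fun k => -hS.eigenvalues k) i else 0 := by
    intro i j
    rw [LinearMap.BilinForm.neg_apply, hc]
    by_cases h : i = j <;> simp [h]
  have h2 : IsMaxPos (-B) (Finset.univ.filter fun i => 0 < -hS.eigenvalues i).card :=
    isMaxPos_of_diag (-B) c _ hc'
  have hcard : (Finset.univ.filter fun i => 0 < -hS.eigenvalues i).card
      = (Finset.univ.filter fun i => hS.eigenvalues i < 0).card := by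
    congr 1
    apply Finset.filter_congr
    intro i _
    simp [neg_pos]
  rw [hcard] at h2
  have hp' := hp.unique h1
  have hq' := hq.unique h2
  rw [bilinSignature, matrixSignature, dif_pos hS, hp', hq']

lemma exists_maxPos_pair {V : Type} [AddCommGroup V] [Module ℝ V] [FiniteDimensional ℝ V]
    (B : LinearMap.BilinForm ℝ V) (hsymm : B.IsSymm) :
    ∃ p q : ℕ, IsMaxPos B p ∧ IsMaxPos (-B) q := by
  classical
  have hS := gram_isHermitian B hsymm
  obtain ⟨c, hc⟩ := exists_diag_basis B hsymm hS
  refine ⟨_, _, isMaxPos_of_diag B c _ hc, isMaxPos_of_diag (-B) c (fun k => -hS.eigenvalues k) ?_⟩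
  intro i j
  rw [LinearMap.BilinForm.neg_apply, hc]
  by_cases h : i = j <;> simp [h]

end Spectral
section Red
variable {V : Type} [AddCommGroup V] [Module ℝ V] [FiniteDimensional ℝ V]
  (B : LinearMap.BilinForm ℝ V)

/-- A nondegenerate bilinear form is surjective onto the dual. -/
lemma bilin_surj (hnd : B.Nondegenerate) :
    Function.Surjective (B : V →ₗ[ℝ] Module.Dual ℝ V) := by
  have hinj : Function.Injective (B : V →ₗ[ℝ] Module.Dual ℝ V) := by
    intro a b hab
    have h0 : ∀ y, B (a - b) y = 0 := by
      intro y
      rw [map_sub, LinearMap.sub_apply]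
      rw [show B a = B b from hab]
      ring
    have := hnd.1 _ h0
    rwa [sub_eq_zero] at this
  exact (LinearMap.injective_iff_surjective_of_finrank_eq_finrank
    Subspace.dual_finrank_eq.symm).mp hinj

lemma posdef_restrict_surj {U : Submodule ℝ V} (hsymm : ∀ x y : V, B x y = B y x)
    (hU : PosDefOn B U) (φ : Module.Dual ℝ ↥U) :
    ∃ wv : ↥U, ∀ u : ↥U, B ↑u ↑wv = φ u := by
  have hnd : (B.restrict U).Nondegenerate := by
    refine LinearMap.BilinForm.Nondegenerate.ofSeparatingLeft ?_
    intro x hx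
    by_contra hx0
    have hxV : (x : V) ≠ 0 := fun h => hx0 (Subtype.ext h)
    have := hU x x.2 hxV
    have h2 := hx x
    rw [LinearMap.BilinForm.restrict_apply, LinearMap.domRestrict_apply] at h2
    rw [h2] at this
    exact lt_irrefl 0 this
  obtain ⟨wv, hwv⟩ := bilin_surj (B.restrict U) hnd φ
  refine ⟨wv, fun u => ?_⟩
  have := congrFun (congrArg DFunLike.coe hwv) u
  rw [LinearMap.BilinForm.restrict_apply, LinearMap.domRestrict_apply] at this
  rw [hsymm, this]

set_option maxHeartbeats 1000000 in
lemma reduction (hsymm : ∀ x y : V, B x y = B y x) (hnd : B.Nondegenerate)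
    (L W : Submodule ℝ V) (hiso : ∀ x ∈ L, ∀ y ∈ L, B x y = 0)
    (hW : ∀ x, x ∈ W ↔ ∀ l ∈ L, B l x = 0)
    (C : LinearMap.BilinForm ℝ (↥W ⧸ Submodule.comap W.subtype L))
    (hC : ∀ x y : ↥W, C (Submodule.Quotient.mk x) (Submodule.Quotient.mk y)
      = B (x : V) (y : V))
    {p q : ℕ} (hp : IsMaxPos B p) (hq : IsMaxPos C q) :
    p = q + Module.finrank ℝ L := by
  classical
  set n := Module.finrank ℝ V with hn
  set d := Module.finrank ℝ L with hd
  have hrefl : B.IsRefl := fun x y h => by rw [hsymm]; exact h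
  have hWo : W = B.orthogonal L := by
    ext x
    rw [LinearMap.BilinForm.mem_orthogonal_iff, hW x]
  have hLW : L ≤ W := fun x hx => (hW x).mpr fun l hl => hiso l hl x hx
  have hdimW : Module.finrank ℝ W = n - d := by
    rw [hWo]; exact LinearMap.BilinForm.finrank_orthogonal hnd L
  have hdn : d ≤ n := Submodule.finrank_le L
  have hεW0 : ∀ l ∈ L, ∀ x ∈ W, B l x = 0 := fun l hl x hx => (hW x).mp hx l hl
  -- ### direction q + d ≤ p
  have dir1 : q + d ≤ p := by
    obtain ⟨U, hU, hUrank⟩ := hq.1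
    obtain ⟨σ, hσ⟩ := (Submodule.comap W.subtype L).mkQ.exists_rightInverse_of_surjective (Submodule.range_mkQ (Submodule.comap W.subtype L))
    have hσeq : ∀ z, (Submodule.comap W.subtype L).mkQ (σ z) = z := by
      intro z
      have := LinearMap.ext_iff.mp hσ z
      simpa using this
    have hσinj : Function.Injective σ := by
      intro a b h
      have := congrArg (Submodule.comap W.subtype L).mkQ h
      rwa [hσeq, hσeq] at this
    set U₁ : Submodule ℝ V := (U.map σ).map W.subtype with hU₁
    have hU₁rank : Module.finrank ℝ U₁ = q := by
      have e1 := (Submodule.equivMapOfInjective σ hσinj U).finrank_eq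
      have e2 := (Submodule.equivMapOfInjective W.subtype (Submodule.injective_subtype W)
        (U.map σ)).finrank_eq
      rw [hU₁, ← e2, ← e1, hUrank]
    have hU₁W : ∀ x ∈ U₁, x ∈ W := by
      intro x hx
      obtain ⟨y, _, rfl⟩ := Submodule.mem_map.mp hx
      exact y.2
    have hU₁pos : PosDefOn B U₁ := by
      intro x hx hx0
      obtain ⟨y, hy, hyx⟩ := Submodule.mem_map.mp hx
      obtain ⟨u, hu, huy⟩ := Submodule.mem_map.mp hy
      have hu0 : u ≠ 0 := by
        rintro rfl
        apply hx0
        rw [← hyx, ← huy]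
        simp
      have hpos := hU u hu hu0
      have hCeq := hC (σ u) (σ u)
      have hmk : Submodule.Quotient.mk (σ u) = u := by rw [← Submodule.mkQ_apply, hσeq]
      rw [hmk] at hCeq
      have hxeq : x = ((σ u : ↥W) : V) := by rw [← hyx, ← huy]; rfl
      rw [hxeq, ← hCeq]
      exact hpos
    -- basis of L and dual vectors
    set e : Basis (Fin d) ℝ ↥L := Module.finBasis ℝ ↥L with he
    set ε : Fin d → V := fun i => ((e i : ↥L) : V) with hε
    have hεL : ∀ i, ε i ∈ L := fun i => (e i).2
    have hεε : ∀ i k, B (ε i) (ε k) = 0 := fun i k => hiso _ (hεL i) _ (hεL k)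
    have hf : ∀ j : Fin d, ∃ fv : V, ∀ i, B (ε i) fv = if i = j then 1 else 0 := by
      intro j
      obtain ⟨ψ, hψ⟩ := LinearMap.dualMap_surjective_of_injective
        (Submodule.injective_subtype L) (e.coord j)
      obtain ⟨v, hv⟩ := bilin_surj B hnd ψ
      refine ⟨v, fun i => ?_⟩
      rw [hsymm]
      have h1 : B v (ε i) = ψ (ε i) := by rw [hv]
      have h2 : ψ (ε i) = (L.subtype.dualMap ψ) (e i) := rfl
      rw [h1, h2, hψ, Basis.coord_apply, Basis.repr_self]
      rcases eq_or_ne i j with hij | hij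
      · simp [hij]
      · simp [Finsupp.single_apply, hij]
    choose f hfspec using hf
    -- first correction: make f orthogonal to U₁
    have hw : ∀ j : Fin d, ∃ w : ↥U₁, ∀ u : ↥U₁, B ↑u ↑w = B ↑u (f j) := by
      intro j
      obtain ⟨w, hws⟩ := posdef_restrict_surj B hsymm hU₁pos ((B.flip (f j)).comp U₁.subtype)
      refine ⟨w, fun u => ?_⟩
      rw [hws u]
      simp [LinearMap.flip_apply]
    choose wv hwvspec using hw
    set f' : Fin d → V := fun j => f j - ↑(wv j) with hf'
    have hf'U : ∀ j, ∀ x ∈ U₁, B x (f' j) = 0 := by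
      intro j x hx
      simp only [hf', map_sub]
      have := hwvspec j ⟨x, hx⟩
      simp only [Submodule.coe_mk] at this
      rw [this]
      ring
    have hf'ε : ∀ i j, B (ε i) (f' j) = if i = j then 1 else 0 := by
      intro i j
      simp only [hf', map_sub]
      rw [hfspec j i]
      have : B (ε i) ↑(wv j) = 0 := hεW0 _ (hεL i) _ (hU₁W _ (wv j).2)
      rw [this]
      ring
    set M : Fin d → Fin d → ℝ := fun i j => B (f' i) (f' j) with hM
    have hMsymm : ∀ i j, M i j = M j i := fun i j => hsymm (f' i) (f' j)
    set f'' : Fin d → V := fun j => f' j - ∑ k, (M k j / 2) • ε k with hf''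
    have hf''ε : ∀ i j, B (ε i) (f'' j) = if i = j then 1 else 0 := by
      intro i j
      simp only [hf'', map_sub, map_sum, _root_.map_smul]
      rw [hf'ε i j]
      have : ∀ k ∈ Finset.univ, (M k j / 2) • B (ε i) (ε k) = 0 := by
        intro k _
        rw [hεε i k, smul_zero]
      rw [Finset.sum_congr rfl this, Finset.sum_const_zero]
      ring
    have hf''U : ∀ j, ∀ x ∈ U₁, B x (f'' j) = 0 := by
      intro j x hx
      simp only [hf'', map_sub, map_sum, _root_.map_smul]
      rw [hf'U j x hx]
      have : ∀ k ∈ Finset.univ, (M k j / 2) • B x (ε k) = 0 := by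
        intro k _
        rw [hsymm x (ε k), hεW0 _ (hεL k) _ (hU₁W _ hx), smul_zero]
      rw [Finset.sum_congr rfl this, Finset.sum_const_zero]
      ring
    have hεf'' : ∀ i j, B (f'' i) (ε j) = if j = i then 1 else 0 := by
      intro i j
      rw [hsymm]
      exact hf''ε j i
    have hf'f'' : ∀ i j, B (f' i) (f'' j) = M i j / 2 := by
      intro i j
      simp only [hf'', map_sub, map_sum, _root_.map_smul]
      have hsum : ∑ k, (M k j / 2) • B (f' i) (ε k) = M i j / 2 := by
        rw [Finset.sum_eq_single i]
        · rw [show B (f' i) (ε i) = 1 by rw [hsymm, hf'ε i i, if_pos rfl]]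
          simp
        · intro k _ hk
          rw [show B (f' i) (ε k) = 0 by rw [hsymm, hf'ε k i, if_neg hk]]
          simp
        · simp
      rw [hsum]
      have hBM : B (f' i) (f' j) = M i j := rfl
      rw [hBM]
      ring
    have hf''f'' : ∀ i j, B (f'' i) (f'' j) = 0 := by
      intro i j
      have hfi : f'' i = f' i - ∑ k, (M k i / 2) • ε k := by rw [hf'']
      rw [hfi, LinearMap.BilinForm.sub_left, LinearMap.BilinForm.sum_left, hf'f'' i j]
      have hsum : ∑ k, B ((M k i / 2) • ε k) (f'' j) = M j i / 2 := by
        rw [Finset.sum_eq_single j]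
        · rw [LinearMap.BilinForm.smul_left, hf''ε j j, if_pos rfl]
          simp [mul_comm]
        · intro k _ hk
          rw [LinearMap.BilinForm.smul_left, hf''ε k j, if_neg hk]
          simp
        · simp
      rw [hsum, hMsymm i j]
      ring
    set g : Fin d → V := fun j => ε j + f'' j with hg
    have hgdef : ∀ j, g j = ε j + f'' j := fun j => by rw [hg]
    have hεg : ∀ i j, B (ε i) (g j) = if i = j then 1 else 0 := by
      intro i j
      rw [hgdef, map_add, hεε i j, hf''ε i j, zero_add]
    have hUg : ∀ j, ∀ x ∈ U₁, B x (g j) = 0 := by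
      intro j x hx
      rw [hgdef, map_add, hf''U j x hx]
      rw [hsymm x (ε j), hεW0 _ (hεL j) _ (hU₁W _ hx)]
      ring
    have hgg : ∀ i j, B (g i) (g j) = if i = j then (2:ℝ) else 0 := by
      intro i j
      rw [hgdef, hgdef, LinearMap.BilinForm.add_left, map_add, map_add,
        hεε i j, hf''ε i j, hεf'' i j, hf''f'' i j]
      rcases eq_or_ne i j with h | h
      · subst h; simp; norm_num
      · simp [h, Ne.symm h]
    have hBεsum : ∀ (c : Fin d → ℝ) (i : Fin d), B (ε i) (∑ j, c j • g j) = c i := by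
      intro c i
      rw [map_sum]
      have hterm : ∀ j ∈ Finset.univ, B (ε i) (c j • g j) = if j = i then c i else 0 := by
        intro j _
        rw [_root_.map_smul, hεg i j, smul_eq_mul]
        rcases eq_or_ne j i with h | h
        · subst h; simp
        · rw [if_neg (Ne.symm h), if_neg h, mul_zero]
      rw [Finset.sum_congr rfl hterm]
      simp
    have hgli : LinearIndependent ℝ g := by
      rw [Fintype.linearIndependent_iff]
      intro c hc i
      have hi := hBεsum c i
      rw [hc, map_zero] at hi
      exact hi.symm
    clear_value g f'' M f' ε e U₁
    set G : Submodule ℝ V := span ℝ (Set.range g) with hG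
    have hGrank : Module.finrank ℝ G = d := by
      rw [hG, finrank_span_eq_card hgli, Fintype.card_fin]
    have hinfUG : U₁ ⊓ G = ⊥ := by
      rw [eq_bot_iff]
      intro x hx
      obtain ⟨c, hcx⟩ := (mem_span_range_iff_exists_fun ℝ).mp hx.2
      have hc0 : ∀ i, c i = 0 := by
        intro i
        have h1 := hBεsum c i
        rw [hcx] at h1
        rw [hεW0 _ (hεL i) _ (hU₁W _ hx.1)] at h1
        exact h1.symm
      have hx0 : x = 0 := by rw [← hcx]; simp [hc0]
      simp [hx0]
    have hU₂rank : Module.finrank ℝ ↥(U₁ ⊔ G) = q + d := by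
      have hs := finrank_sup_add_finrank_inf_eq U₁ G
      rw [hinfUG, finrank_bot, add_zero] at hs
      rw [hs, hU₁rank, hGrank]
    have hU₂pos : PosDefOn B (U₁ ⊔ G) := by
      intro x hx hx0
      obtain ⟨u, hu, gg, hggm, rfl⟩ := Submodule.mem_sup.mp hx
      obtain ⟨c, hcgg⟩ := (mem_span_range_iff_exists_fun ℝ).mp hggm
      have hBugg : B u gg = 0 := by
        rw [← hcgg, map_sum]
        refine Finset.sum_eq_zero fun j _ => ?_
        rw [_root_.map_smul, hUg j u hu, smul_zero]
      have hBggu : B gg u = 0 := by rw [hsymm]; exact hBugg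
      have hBgggg : B gg gg = ∑ i, c i * c i * 2 := by
        rw [← hcgg]
        exact bilin_diag_sum B g (fun _ => (2:ℝ)) hgg c
      have hsumnn : (0:ℝ) ≤ ∑ i, c i * c i * 2 := by
        refine Finset.sum_nonneg fun i _ => ?_
        have := mul_self_nonneg (c i)
        nlinarith
      have hexp : B (u + gg) (u + gg) = B u u + ∑ i, c i * c i * 2 := by
        rw [LinearMap.BilinForm.add_left, map_add, map_add, hBugg, hBggu, hBgggg]
        ring
      rw [hexp]
      by_cases hu0 : u = 0
      · subst hu0
        have hgg0 : gg ≠ 0 := by simpa using hx0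
        have hcne : ∃ i, c i ≠ 0 := by
          by_contra hcon
          push_neg at hcon
          apply hgg0
          rw [← hcgg]
          simp [hcon]
        obtain ⟨i0, hi0⟩ := hcne
        have hpos : (0:ℝ) < ∑ i, c i * c i * 2 := by
          refine Finset.sum_pos' (fun i _ => by nlinarith [mul_self_nonneg (c i)]) ⟨i0, Finset.mem_univ _, ?_⟩
          nlinarith [mul_self_pos.mpr hi0]
        simpa using hpos
      · have := hU₁pos u hu hu0
        nlinarith
    have hle := hp.2 _ hU₂pos
    omega
  -- ### direction p ≤ q + d
  have dir2 : p ≤ q + d := by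
    obtain ⟨P, hP, hPrank⟩ := hp.1
    have hPW := finrank_sup_add_finrank_inf_eq P W
    have hPsup : Module.finrank ℝ ↥(P ⊔ W) ≤ n := Submodule.finrank_le _
    set T : ↥(P ⊓ W) →ₗ[ℝ] (↥W ⧸ (Submodule.comap W.subtype L)) :=
      (Submodule.comap W.subtype L).mkQ ∘ₗ Submodule.inclusion inf_le_right with hT
    have hTker : ∀ x : ↥(P ⊓ W), T x = 0 → x = 0 := by
      intro x hx
      have hmem : (Submodule.inclusion (inf_le_right : P ⊓ W ≤ W)) x ∈ (Submodule.comap W.subtype L) := by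
        rw [hT] at hx
        simp only [LinearMap.comp_apply, Submodule.mkQ_apply] at hx
        rwa [Submodule.Quotient.mk_eq_zero] at hx
      have hxL : (x : V) ∈ L := by
        have h2 := Submodule.mem_comap.mp hmem
        simpa using h2
      have hBxx : B x x = 0 := hiso _ hxL _ hxL
      by_contra hx0
      have hxV : (x : V) ≠ 0 := fun h => hx0 (Subtype.ext h)
      have := hP x x.2.1 hxV
      rw [hBxx] at this
      exact lt_irrefl 0 this
    have hTinj : Function.Injective T := by
      rw [injective_iff_map_eq_zero]
      exact hTker
    have hrange : Module.finrank ℝ (LinearMap.range T) = Module.finrank ℝ ↥(P ⊓ W) :=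
      LinearMap.finrank_range_of_inj hTinj
    have hposC : PosDefOn C (LinearMap.range T) := by
      intro y hy hy0
      obtain ⟨x, rfl⟩ := LinearMap.mem_range.mp hy
      have hx0 : x ≠ 0 := by
        rintro rfl
        simp at hy0
      have hxV : (x : V) ≠ 0 := fun h => hx0 (Subtype.ext h)
      have hTx : T x = Submodule.Quotient.mk (Submodule.inclusion
        (inf_le_right : P ⊓ W ≤ W) x) := rfl
      rw [hTx, hC]
      rw [show ((Submodule.inclusion (inf_le_right : P ⊓ W ≤ W) x : ↥W) : V) = (x : V)
        from Submodule.coe_inclusion _ _]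
      exact hP x x.2.1 hxV
    have hle := hq.2 _ hposC
    rw [hPrank, hdimW] at hPW
    have hpn : p ≤ n := hPrank ▸ Submodule.finrank_le P
    omega
  omega
end Red


lemma quotient_nondeg {V : Type} [AddCommGroup V] [Module ℝ V] [FiniteDimensional ℝ V]
    (B : LinearMap.BilinForm ℝ V) (hsymm : ∀ x y : V, B x y = B y x) (hnd : B.Nondegenerate)
    (L : Submodule ℝ V) (hiso : ∀ x ∈ L, ∀ y ∈ L, B x y = 0)
    (C : LinearMap.BilinForm ℝ
      (↥(B.orthogonal L) ⧸ Submodule.comap (B.orthogonal L).subtype L))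
    (hC : ∀ x y : ↥(B.orthogonal L),
      C (Submodule.Quotient.mk x) (Submodule.Quotient.mk y) = B (x : V) (y : V)) :
    C.Nondegenerate := by
  have hrefl : B.IsRefl := fun x y h => by rw [hsymm]; exact h
  refine LinearMap.BilinForm.Nondegenerate.ofSeparatingLeft ?_
  intro xq hxq
  obtain ⟨x, rfl⟩ := Submodule.Quotient.mk_surjective _ xq
  have hxW : ∀ y : ↥(B.orthogonal L), B (x : V) (y : V) = 0 := by
    intro y
    have := hxq (Submodule.Quotient.mk y)
    rwa [hC] at this
  have hxo : (x : V) ∈ B.orthogonal (B.orthogonal L) := by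
    rw [LinearMap.BilinForm.mem_orthogonal_iff]
    intro nn hn
    show B nn (x : V) = 0
    rw [hsymm]
    exact hxW ⟨nn, hn⟩
  have hxL : (x : V) ∈ L := by
    rwa [LinearMap.BilinForm.orthogonal_orthogonal hnd hrefl L] at hxo
  rw [Submodule.Quotient.mk_eq_zero]
  exact hxL

/-- Sublagrangian reduction: if `(V, B)` is a nondegenerate symmetric form over `ℝ` and
`L` is an isotropic subspace, then the form induced on `L^⊥/L` is nondegenerate and has
the same signature as `B`. -/
theorem sublagrangian_reduction (V : Type) [AddCommGroup V] [Module ℝ V]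
    [FiniteDimensional ℝ V] (B : LinearMap.BilinForm ℝ V)
    (hsymm : B.IsSymm) (hnd : B.Nondegenerate)
    (L : Submodule ℝ V) (hiso : ∀ x ∈ L, ∀ y ∈ L, B x y = 0)
    (C : LinearMap.BilinForm ℝ
      (↥(B.orthogonal L) ⧸ Submodule.comap (B.orthogonal L).subtype L))
    (hC : ∀ x y : ↥(B.orthogonal L),
      C (Submodule.Quotient.mk x) (Submodule.Quotient.mk y) = B (x : V) (y : V)) :
    C.Nondegenerate ∧ bilinSignature C = bilinSignature B := by
  have hs : ∀ x y : V, B x y = B y x := fun x y => hsymm.eq x y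
  have hCnd : C.Nondegenerate := quotient_nondeg B hs hnd L hiso C hC
  have hCsymm : C.IsSymm := by
    rw [LinearMap.BilinForm.isSymm_def]
    intro xq yq
    obtain ⟨x, rfl⟩ := Submodule.Quotient.mk_surjective _ xq
    obtain ⟨y, rfl⟩ := Submodule.Quotient.mk_surjective _ yq
    rw [hC, hC, hs]
  have hW : ∀ x, x ∈ B.orthogonal L ↔ ∀ l ∈ L, B l x = 0 := by
    intro x
    rw [LinearMap.BilinForm.mem_orthogonal_iff]
  obtain ⟨p, q', hp, hq'⟩ := exists_maxPos_pair B hsymm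
  obtain ⟨pc, qc, hpc, hqc⟩ := exists_maxPos_pair C hCsymm
  have h1 : p = pc + Module.finrank ℝ L :=
    reduction B hs hnd L (B.orthogonal L) hiso hW C hC hp hpc
  have h2 : q' = qc + Module.finrank ℝ L := by
    refine reduction (-B) (fun x y => by simp [hs x y]) ?_ L (B.orthogonal L)
      (fun x hx y hy => by simp [hiso x hx y hy]) ?_ (-C) ?_ hq' hqc
    · refine LinearMap.BilinForm.Nondegenerate.ofSeparatingLeft ?_
      intro x hx
      apply hnd.1
      intro y
      have := hx y
      simpa using this
    · intro x
      rw [hW x]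
      constructor
      · intro h l hl
        simp [h l hl]
      · intro h l hl
        have := h l hl
        simpa using this
    · intro x y
      simp [hC x y]
  refine ⟨hCnd, ?_⟩
  rw [sig_eq C hCsymm hpc hqc, sig_eq B hsymm hp hq']
  omega
end

section
/- Novikov additivity of the signature (algebraic form): let (V, φ) be a nonsingular symmetric form over ℝ which is a union of subforms (V_1, φ_1) and (V_2, φ_2) with V_1^⊥ = V_2 (special union). Then τ(V, φ) = τ(V_1, φ_1) + τ(V_2, φ_2). -/
open Matrix

open Module Finset
set_option linter.unusedSectionVars false
set_option maxHeartbeats 1000000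

section Aux
variable {V : Type*} [AddCommGroup V] [Module ℝ V]

lemma apply_self_eq_sum {ι : Type*} [Fintype ι] (B : LinearMap.BilinForm ℝ V)
    (v : Basis ι ℝ V) (hv : B.IsOrthoᵢ v) (x : V) :
    B x x = ∑ i, (v.repr x i)^2 * B (v i) (v i) := by
  conv_lhs => rw [← v.sum_repr x]
  simp only [map_sum, _root_.map_smul, LinearMap.sum_apply, LinearMap.smul_apply, smul_eq_mul]
  refine Finset.sum_congr rfl fun j _ => ?_
  rw [Finset.sum_eq_single j]
  · ring
  · intro i _ hij
    rw [hv hij]; ring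
  · intro h; exact absurd (Finset.mem_univ j) h

variable [FiniteDimensional ℝ V] {ι κ : Type*} [Fintype ι] [Fintype κ]
variable (B : LinearMap.BilinForm ℝ V)

lemma pos_on_span (v : Basis ι ℝ V) (hv : B.IsOrthoᵢ v) (s : Finset ι)
    (hs : ∀ i ∈ s, 0 < B (v i) (v i)) {x : V}
    (hx : x ∈ Submodule.span ℝ (v '' (s : Set ι))) (hx0 : x ≠ 0) : 0 < B x x := by
  rw [Basis.mem_span_image] at hx
  rw [apply_self_eq_sum B v hv x]
  obtain ⟨i0, hi0⟩ : ∃ i, v.repr x i ≠ 0 := by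
    by_contra h
    push_neg at h
    exact hx0 (v.repr.injective (by ext i; simp [h i]))
  have hi0s : i0 ∈ s := hx (Finsupp.mem_support_iff.2 hi0)
  refine Finset.sum_pos' (fun i _ => ?_) ⟨i0, Finset.mem_univ i0, ?_⟩
  · by_cases his : i ∈ s
    · exact mul_nonneg (sq_nonneg _) (le_of_lt (hs i his))
    · have : v.repr x i = 0 := by
        by_contra h
        exact his (hx (Finsupp.mem_support_iff.2 h))
      simp [this]
  · exact mul_pos (by positivity) (hs i0 hi0s)

lemma nonpos_on_span (v : Basis ι ℝ V) (hv : B.IsOrthoᵢ v) (s : Finset ι)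
    (hs : ∀ i ∈ s, B (v i) (v i) ≤ 0) {x : V}
    (hx : x ∈ Submodule.span ℝ (v '' (s : Set ι))) : B x x ≤ 0 := by
  rw [Basis.mem_span_image] at hx
  rw [apply_self_eq_sum B v hv x]
  refine Finset.sum_nonpos fun i _ => ?_
  by_cases his : i ∈ s
  · exact mul_nonpos_of_nonneg_of_nonpos (sq_nonneg _) (hs i his)
  · have : v.repr x i = 0 := by
      by_contra h
      exact his (hx (Finsupp.mem_support_iff.2 h))
    simp [this]

lemma finrank_span_basis_image (v : Basis ι ℝ V) (s : Finset ι) :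
    Module.finrank ℝ (Submodule.span ℝ (v '' (s : Set ι))) = s.card := by
  classical
  have h1 : (⇑v '' (s : Set ι)) = ((s.image v : Finset V) : Set V) := by simp
  rw [h1, finrank_span_finset_eq_card, Finset.card_image_of_injective _ v.injective]
  refine (((linearIndepOn_id_range_iff v.injective).2 v.linearIndependent).mono ?_)
  intro x hx
  obtain ⟨i, -, rfl⟩ := Finset.mem_image.mp hx
  exact ⟨i, rfl⟩


lemma posCount_le_s19 (v : Basis ι ℝ V) (hv : B.IsOrthoᵢ v) (w : Basis κ ℝ V) (hw : B.IsOrthoᵢ w) :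
    (univ.filter fun i => 0 < B (v i) (v i)).card ≤
      (univ.filter fun j => 0 < B (w j) (w j)).card := by
  classical
  set s := univ.filter fun i => 0 < B (v i) (v i) with hs
  set t := univ.filter fun j => ¬ 0 < B (w j) (w j) with ht
  set P := Submodule.span ℝ (v '' (s : Set ι)) with hP
  set N := Submodule.span ℝ (w '' (t : Set κ)) with hN
  have hdisj : Disjoint P N := by
    rw [Submodule.disjoint_def]
    intro x hxP hxN
    by_contra hx0
    have h1 := pos_on_span B v hv s (fun i hi => (Finset.mem_filter.1 hi).2) hxP hx0
    have h2 := nonpos_on_span B w hw t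
      (fun j hj => le_of_not_gt (Finset.mem_filter.1 hj).2) hxN
    linarith
  have hdim := Submodule.finrank_add_finrank_le_of_disjoint hdisj
  rw [hP, hN, finrank_span_basis_image, finrank_span_basis_image] at hdim
  have hV : finrank ℝ V = Fintype.card κ := finrank_eq_card_basis w
  have ht' : t.card = Fintype.card κ - (univ.filter fun j => 0 < B (w j) (w j)).card := by
    rw [ht, Finset.filter_not, Finset.card_sdiff_of_subset (Finset.filter_subset _ _)]
    simp
  have hle : (univ.filter fun j => 0 < B (w j) (w j)).card ≤ Fintype.card κ := by
    simpa using Finset.card_filter_le univ _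
  omega

lemma posCount_eq_s19 (v : Basis ι ℝ V) (hv : B.IsOrthoᵢ v) (w : Basis κ ℝ V) (hw : B.IsOrthoᵢ w) :
    (univ.filter fun i => 0 < B (v i) (v i)).card =
      (univ.filter fun j => 0 < B (w j) (w j)).card :=
  le_antisymm (posCount_le_s19 B v hv w hw) (posCount_le_s19 B w hw v hv)

lemma neg_isOrthoI (v : ι → V) (hv : B.IsOrthoᵢ v) : (-B).IsOrthoᵢ v := by
  intro i j h
  have := hv h
  simp only [Function.onFun] at this ⊢
  simp [this]

lemma negCount_eq (v : Basis ι ℝ V) (hv : B.IsOrthoᵢ v) (w : Basis κ ℝ V) (hw : B.IsOrthoᵢ w) :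
    (univ.filter fun i => B (v i) (v i) < 0).card =
      (univ.filter fun j => B (w j) (w j) < 0).card := by
  have h := posCount_eq_s19 (-B) v (neg_isOrthoI B v hv) w (neg_isOrthoI B w hw)
  simpa [neg_pos] using h

end Aux

section Bridge
variable {V : Type} [AddCommGroup V] [Module ℝ V] [FiniteDimensional ℝ V]

lemma bilinSignature_eq_counts (B : LinearMap.BilinForm ℝ V) (hB : B.IsSymm)
    {ι : Type*} [Fintype ι] (v : Basis ι ℝ V) (hv : B.IsOrthoᵢ v) :
    bilinSignature B = ((univ.filter fun i => 0 < B (v i) (v i)).card : ℤ)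
      - ((univ.filter fun i => B (v i) (v i) < 0).card : ℤ) := by
  classical
  set n := Module.finrank ℝ V with hn
  set b := Module.finBasis ℝ V with hb
  set S : Matrix (Fin n) (Fin n) ℝ := Matrix.of fun i j => B (b i) (b j) with hSdef
  have hS : S.IsHermitian := by
    apply Matrix.IsHermitian.ext
    intro i j
    simp only [hSdef, Matrix.of_apply, RCLike.star_def, starRingEnd_apply, star_trivial]
    exact hB.eq (b j) (b i)
  -- eigen data
  set e := hS.eigenvectorBasis with he
  set f : EuclideanSpace ℝ (Fin n) ≃ₗ[ℝ] V :=
    (WithLp.linearEquiv 2 ℝ (Fin n → ℝ)).trans b.equivFun.symm with hf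
  set u : Basis (Fin n) ℝ V := e.toBasis.map f with hudef
  have hui : ∀ i, u i = ∑ k, e i k • b k := by
    intro i
    simp [hudef, hf, Module.Basis.map_apply, Module.Basis.equivFun_symm_apply]
    rfl
  have hBu : ∀ i j, B (u i) (u j) = if i = j then hS.eigenvalues i else 0 := by
    intro i j
    have expand : B (u i) (u j) = ∑ k, (e i k) * ∑ l, S k l * (e j l) := by
      rw [hui i, hui j]
      simp only [map_sum, _root_.map_smul, LinearMap.sum_apply, LinearMap.smul_apply,
        smul_eq_mul, Finset.mul_sum]
      rw [Finset.sum_comm]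
      refine Finset.sum_congr rfl fun k _ => Finset.sum_congr rfl fun l _ => ?_
      simp only [hSdef, Matrix.of_apply]
      ring
    have hmul : ∀ k, (∑ l, S k l * (e j l)) = hS.eigenvalues j * e j k := by
      intro k
      have := congrFun (hS.mulVec_eigenvectorBasis j) k
      simpa [Matrix.mulVec, dotProduct] using this
    rw [expand]
    simp only [hmul]
    have : (∑ k, e i k * (hS.eigenvalues j * e j k))
        = hS.eigenvalues j * ∑ k, e i k * e j k := by
      rw [Finset.mul_sum]; refine Finset.sum_congr rfl fun k _ => by ring
    rw [this]
    have hinner : (∑ k, e i k * e j k) = if i = j then (1:ℝ) else 0 := by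
      have := orthonormal_iff_ite.mp e.orthonormal i j
      simpa [PiLp.inner_apply, RCLike.inner_apply, starRingEnd_apply, mul_comm] using this
    rw [hinner]
    by_cases hij : i = j
    · subst hij; simp
    · simp [hij]
  have hu_orth : B.IsOrthoᵢ u := by
    intro i j hij
    have := hBu i j
    simp only [Function.onFun]
    rw [this, if_neg hij]
  have hudiag : ∀ i, B (u i) (u i) = hS.eigenvalues i := fun i => by
    rw [hBu i i, if_pos rfl]
  -- unfold bilinSignature
  rw [bilinSignature, matrixSignature, dif_pos hS]
  have hp := posCount_eq_s19 B u hu_orth v hv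
  have hne := negCount_eq B u hu_orth v hv
  have h1 : (univ.filter fun i => 0 < hS.eigenvalues i).card
      = (univ.filter fun i => 0 < B (u i) (u i)).card := by
    refine congrArg Finset.card (Finset.filter_congr fun i _ => by rw [hudiag i])
  have h2 : (univ.filter fun i => hS.eigenvalues i < 0).card
      = (univ.filter fun i => B (u i) (u i) < 0).card := by
    refine congrArg Finset.card (Finset.filter_congr fun i _ => by rw [hudiag i])
  rw [h1, h2, hp, hne]

end Bridge

section Glue

lemma card_filter_sum {α β : Type*} [Fintype α] [Fintype β] (p : α ⊕ β → Prop)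
    [DecidablePred p] :
    (univ.filter p).card = (univ.filter fun a => p (Sum.inl a)).card
      + (univ.filter fun b => p (Sum.inr b)).card := by
  classical
  rw [← Finset.univ_disjSum_univ]
  have : (Finset.univ.disjSum Finset.univ).filter p
      = (univ.filter fun a => p (Sum.inl a)).disjSum (univ.filter fun b => p (Sum.inr b)) := by
    ext x
    cases x <;> simp
  rw [this, Finset.card_disjSum]

variable {V W : Type} [AddCommGroup V] [Module ℝ V] [FiniteDimensional ℝ V]
  [AddCommGroup W] [Module ℝ W] [FiniteDimensional ℝ W]

lemma isSymm_restrict {B : LinearMap.BilinForm ℝ V} (hB : B.IsSymm) (W₁ : Submodule ℝ V) :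
    (B.restrict W₁).IsSymm := by
  refine ⟨fun x y => ?_⟩
  simp only [LinearMap.BilinForm.restrict_apply]
  exact hB.eq _ _

lemma sig_iso (B : LinearMap.BilinForm ℝ V) (B' : LinearMap.BilinForm ℝ W)
    (hB : B.IsSymm) (e : V ≃ₗ[ℝ] W) (h : ∀ x y, B' (e x) (e y) = B x y) :
    bilinSignature B = bilinSignature B' := by
  obtain ⟨v, hv⟩ := LinearMap.BilinForm.exists_orthogonal_basis (LinearMap.BilinForm.isSymm_iff.1 hB)
  have hB' : B'.IsSymm := by
    refine ⟨fun x y => ?_⟩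
    have h1 := h (e.symm x) (e.symm y)
    have h2 := h (e.symm y) (e.symm x)
    simp only [LinearEquiv.apply_symm_apply] at h1 h2
    rw [h1, h2]
    exact hB.eq _ _
  have hv' : B'.IsOrthoᵢ (v.map e) := by
    intro i j hij
    have := hv hij
    simp only [Function.onFun] at this ⊢
    rw [Module.Basis.map_apply, Module.Basis.map_apply, h]
    exact this
  rw [bilinSignature_eq_counts B hB v hv, bilinSignature_eq_counts B' hB' (v.map e) hv']
  have c1 : (univ.filter fun i => 0 < B (v i) (v i)).card
      = (univ.filter fun i => 0 < B' ((v.map e) i) ((v.map e) i)).card :=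
    congrArg Finset.card (Finset.filter_congr fun i _ => by rw [Module.Basis.map_apply, h])
  have c2 : (univ.filter fun i => B (v i) (v i) < 0).card
      = (univ.filter fun i => B' ((v.map e) i) ((v.map e) i) < 0).card :=
    congrArg Finset.card (Finset.filter_congr fun i _ => by rw [Module.Basis.map_apply, h])
  rw [c1, c2]

lemma sig_orthsum (B : LinearMap.BilinForm ℝ V) (hB : B.IsSymm)
    (W₁ W₂ : Submodule ℝ V) (hc : IsCompl W₁ W₂)
    (h12 : ∀ x ∈ W₁, ∀ y ∈ W₂, B x y = 0) :
    bilinSignature B = bilinSignature (B.restrict W₁) + bilinSignature (B.restrict W₂) := by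
  classical
  obtain ⟨b₁, hb₁⟩ := LinearMap.BilinForm.exists_orthogonal_basis (LinearMap.BilinForm.isSymm_iff.1 (isSymm_restrict hB W₁))
  obtain ⟨b₂, hb₂⟩ := LinearMap.BilinForm.exists_orthogonal_basis (LinearMap.BilinForm.isSymm_iff.1 (isSymm_restrict hB W₂))
  set u := (b₁.prod b₂).map (Submodule.prodEquivOfIsCompl W₁ W₂ hc) with hu
  have hul : ∀ i, u (Sum.inl i) = (b₁ i : V) := by
    intro i
    rw [hu, Module.Basis.map_apply, Submodule.coe_prodEquivOfIsCompl']
    simp [Basis.prod_apply_inl_fst, Basis.prod_apply_inl_snd]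
  have hur : ∀ i, u (Sum.inr i) = (b₂ i : V) := by
    intro i
    rw [hu, Module.Basis.map_apply, Submodule.coe_prodEquivOfIsCompl']
    simp [Basis.prod_apply_inr_fst, Basis.prod_apply_inr_snd]
  have hu_orth : B.IsOrthoᵢ u := by
    intro i j hij
    simp only [Function.onFun]
    rcases i with i | i <;> rcases j with j | j
    · rw [hul, hul]
      have hij' : i ≠ j := fun hh => hij (congrArg Sum.inl hh)
      have := hb₁ hij'
      simpa [LinearMap.BilinForm.restrict_apply] using this
    · rw [hul, hur]; exact h12 _ (b₁ i).2 _ (b₂ j).2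
    · rw [hur, hul]
      have hsy : B ((b₂ i : V)) ((b₁ j : V)) = B ((b₁ j : V)) ((b₂ i : V)) := by
        simpa using hB.eq ((b₂ i : V)) ((b₁ j : V))
      rw [hsy]
      exact h12 _ (b₁ j).2 _ (b₂ i).2
    · rw [hur, hur]
      have hij' : i ≠ j := fun hh => hij (congrArg Sum.inr hh)
      have := hb₂ hij'
      simpa [LinearMap.BilinForm.restrict_apply] using this
  rw [bilinSignature_eq_counts B hB u hu_orth,
    bilinSignature_eq_counts (B.restrict W₁) (isSymm_restrict hB W₁) b₁ hb₁,
    bilinSignature_eq_counts (B.restrict W₂) (isSymm_restrict hB W₂) b₂ hb₂,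
    card_filter_sum, card_filter_sum]
  have e1 : ∀ i, B (u (Sum.inl i)) (u (Sum.inl i)) = (B.restrict W₁) (b₁ i) (b₁ i) := by
    intro i; rw [hul]; simp [LinearMap.BilinForm.restrict_apply]
  have e2 : ∀ i, B (u (Sum.inr i)) (u (Sum.inr i)) = (B.restrict W₂) (b₂ i) (b₂ i) := by
    intro i; rw [hur]; simp [LinearMap.BilinForm.restrict_apply]
  have c1 : (univ.filter fun a => 0 < B (u (Sum.inl a)) (u (Sum.inl a))).card
      = (univ.filter fun i => 0 < (B.restrict W₁) (b₁ i) (b₁ i)).card :=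
    congrArg Finset.card (Finset.filter_congr fun i _ => by rw [e1 i])
  have c2 : (univ.filter fun a => B (u (Sum.inl a)) (u (Sum.inl a)) < 0).card
      = (univ.filter fun i => (B.restrict W₁) (b₁ i) (b₁ i) < 0).card :=
    congrArg Finset.card (Finset.filter_congr fun i _ => by rw [e1 i])
  have c3 : (univ.filter fun a => 0 < B (u (Sum.inr a)) (u (Sum.inr a))).card
      = (univ.filter fun i => 0 < (B.restrict W₂) (b₂ i) (b₂ i)).card :=
    congrArg Finset.card (Finset.filter_congr fun i _ => by rw [e2 i])
  have c4 : (univ.filter fun a => B (u (Sum.inr a)) (u (Sum.inr a)) < 0).card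
      = (univ.filter fun i => (B.restrict W₂) (b₂ i) (b₂ i) < 0).card :=
    congrArg Finset.card (Finset.filter_congr fun i _ => by rw [e2 i])
  rw [c1, c2, c3, c4]
  push_cast
  ring

end Glue

section Metab
variable {V : Type} [AddCommGroup V] [Module ℝ V] [FiniteDimensional ℝ V]

lemma sig_metab (B : LinearMap.BilinForm ℝ V) (hB : B.IsSymm) (hnd : B.Nondegenerate)
    (R : Submodule ℝ V) (hiso : ∀ x ∈ R, ∀ y ∈ R, B x y = 0)
    (hr : Module.finrank ℝ V ≤ 2 * Module.finrank ℝ R) :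
    bilinSignature B = 0 := by
  classical
  obtain ⟨v, hv⟩ := LinearMap.BilinForm.exists_orthogonal_basis (LinearMap.BilinForm.isSymm_iff.1 hB)
  set p := (univ.filter fun i => 0 < B (v i) (v i)).card with hp
  set q := (univ.filter fun i => B (v i) (v i) < 0).card with hq
  -- each diagonal entry nonzero
  have hdiag : ∀ i, B (v i) (v i) ≠ 0 := fun i =>
    LinearMap.BilinForm.iIsOrtho.not_isOrtho_basis_self_of_nondegenerate hv hnd i
  have hpq : p + q = Module.finrank ℝ V := by
    have : (univ.filter fun i => B (v i) (v i) < 0)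
        = (univ.filter fun i => ¬ 0 < B (v i) (v i)) := by
      refine Finset.filter_congr fun i _ => ?_
      constructor
      · intro h; exact not_lt.2 (le_of_lt h)
      · intro h; exact lt_of_le_of_ne (not_lt.1 h) (hdiag i)
    rw [hp, hq, this, Finset.card_filter_add_card_filter_not]
    exact (finrank_eq_card_basis v).symm
  -- positive part disjoint from R
  have hdisjP : Disjoint (Submodule.span ℝ
      (v '' ((univ.filter fun i => 0 < B (v i) (v i)) : Set _))) R := by
    rw [Submodule.disjoint_def]
    intro x hxP hxR
    by_contra hx0
    have h1 := pos_on_span B v hv _ (fun i hi => (Finset.mem_filter.1 hi).2) hxP hx0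
    have h2 := hiso x hxR x hxR
    linarith
  have hP := Submodule.finrank_add_finrank_le_of_disjoint hdisjP
  rw [finrank_span_basis_image] at hP
  -- negative part disjoint from R
  have hvneg : (-B).IsOrthoᵢ v := neg_isOrthoI B v hv
  have hdisjN : Disjoint (Submodule.span ℝ
      (v '' ((univ.filter fun i => 0 < (-B) (v i) (v i)) : Set _))) R := by
    rw [Submodule.disjoint_def]
    intro x hxP hxR
    by_contra hx0
    have h1 := pos_on_span (-B) v hvneg _ (fun i hi => (Finset.mem_filter.1 hi).2) hxP hx0
    have h2 := hiso x hxR x hxR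
    simp only [LinearMap.neg_apply] at h1
    linarith
  have hN := Submodule.finrank_add_finrank_le_of_disjoint hdisjN
  rw [finrank_span_basis_image] at hN
  have hqcard : (univ.filter fun i => 0 < (-B) (v i) (v i)).card = q := by
    rw [hq]
    refine congrArg Finset.card (Finset.filter_congr fun i _ => ?_)
    simp [neg_pos]
  rw [hqcard] at hN
  rw [bilinSignature_eq_counts B hB v hv, ← hp, ← hq]
  have : p = q := by omega
  rw [this]; ring

end Metab

section Main
variable {V : Type} [AddCommGroup V] [Module ℝ V] [FiniteDimensional ℝ V]

lemma sig_zero_form (B : LinearMap.BilinForm ℝ V) (h : ∀ x y, B x y = 0) :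
    bilinSignature B = 0 := by
  have hB : B.IsSymm := ⟨fun x y => by rw [h, h]⟩
  have hv : B.IsOrthoᵢ (Module.finBasis ℝ V) := by
    intro i j _
    exact h _ _
  rw [bilinSignature_eq_counts B hB _ hv]
  simp [h]

end Main


/-- Novikov additivity of the signature (algebraic form): if a nonsingular symmetric form
`(V, B)` over `ℝ` is a special union of subforms on `V₁` and `V₂` (i.e. `B(V₁, V₂) = 0`
and `V₁^⊥ = V₂`), then `τ(V,B) = τ(V₁,B|) + τ(V₂,B|)`. -/
theorem novikov_additivity (V : Type) [AddCommGroup V] [Module ℝ V]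
    [FiniteDimensional ℝ V] (B : LinearMap.BilinForm ℝ V)
    (hsymm : B.IsSymm) (hnd : B.Nondegenerate)
    (V₁ V₂ : Submodule ℝ V)
    (horth : ∀ x ∈ V₁, ∀ y ∈ V₂, B x y = 0)
    (hperp : B.orthogonal V₁ = V₂) :
    bilinSignature B = bilinSignature (B.restrict V₁) + bilinSignature (B.restrict V₂) := by
  classical
  set R : Submodule ℝ V := V₁ ⊓ V₂ with hRdef
  have hrefl : B.IsRefl := hsymm.isRefl
  have hsymm' : ∀ x y : V, B x y = B y x := fun x y => by
    have h := hsymm.eq x y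
    exact h
  have horth' : ∀ x ∈ V₂, ∀ y ∈ V₁, B x y = 0 := fun x hx y hy => by
    rw [hsymm' x y]; exact horth y hy x hx
  have hRV₁ : R ≤ V₁ := inf_le_left
  have hRV₂ : R ≤ V₂ := inf_le_right
  have hV₂perp : B.orthogonal V₂ = V₁ := by
    rw [← hperp, LinearMap.BilinForm.orthogonal_orthogonal hnd hrefl]
  -- membership in R from killing V₁ resp. V₂
  have hradV₁ : ∀ u ∈ V₁, (∀ z ∈ V₁, B u z = 0) → u ∈ R := by
    intro u hu h0
    refine ⟨hu, ?_⟩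
    have hmem : u ∈ B.orthogonal V₁ := by
      rw [LinearMap.BilinForm.mem_orthogonal_iff]
      intro z hz
      rw [hsymm' z u]
      exact h0 z hz
    exact hperp ▸ hmem
  have hradV₂ : ∀ u ∈ V₂, (∀ z ∈ V₂, B u z = 0) → u ∈ R := by
    intro u hu h0
    refine ⟨?_, hu⟩
    have hmem : u ∈ B.orthogonal V₂ := by
      rw [LinearMap.BilinForm.mem_orthogonal_iff]
      intro z hz
      rw [hsymm' z u]
      exact h0 z hz
    exact hV₂perp ▸ hmem
  -- complements of R inside V₁ and V₂
  obtain ⟨U₁', hU₁'⟩ := Submodule.exists_isCompl (R.comap V₁.subtype)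
  obtain ⟨U₂', hU₂'⟩ := Submodule.exists_isCompl (R.comap V₂.subtype)
  set U₁ : Submodule ℝ V := U₁'.map V₁.subtype with hU₁def
  set U₂ : Submodule ℝ V := U₂'.map V₂.subtype with hU₂def
  have hU₁le : U₁ ≤ V₁ := Submodule.map_subtype_le _ _
  have hU₂le : U₂ ≤ V₂ := Submodule.map_subtype_le _ _
  have hmapR₁ : (R.comap V₁.subtype).map V₁.subtype = R := by
    rw [Submodule.map_comap_subtype, inf_of_le_right hRV₁]
  have hmapR₂ : (R.comap V₂.subtype).map V₂.subtype = R := by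
    rw [Submodule.map_comap_subtype, inf_of_le_right hRV₂]
  have hU₁supR : R ⊔ U₁ = V₁ := by
    have h := congrArg (Submodule.map V₁.subtype) hU₁'.sup_eq_top
    rwa [Submodule.map_sup, hmapR₁, Submodule.map_subtype_top] at h
  have hU₂supR : R ⊔ U₂ = V₂ := by
    have h := congrArg (Submodule.map V₂.subtype) hU₂'.sup_eq_top
    rwa [Submodule.map_sup, hmapR₂, Submodule.map_subtype_top] at h
  have hU₁disjR : Disjoint U₁ R := by
    rw [Submodule.disjoint_def]
    intro x hxU hxR
    obtain ⟨y, hy, rfl⟩ := Submodule.mem_map.1 hxU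
    have hyR : y ∈ R.comap V₁.subtype := by
      rw [Submodule.mem_comap]; exact hxR
    have h0 : y ∈ (R.comap V₁.subtype) ⊓ U₁' := ⟨hyR, hy⟩
    rw [hU₁'.inf_eq_bot, Submodule.mem_bot] at h0
    rw [h0]; rfl
  have hU₂disjR : Disjoint U₂ R := by
    rw [Submodule.disjoint_def]
    intro x hxU hxR
    obtain ⟨y, hy, rfl⟩ := Submodule.mem_map.1 hxU
    have hyR : y ∈ R.comap V₂.subtype := by
      rw [Submodule.mem_comap]; exact hxR
    have h0 : y ∈ (R.comap V₂.subtype) ⊓ U₂' := ⟨hyR, hy⟩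
    rw [hU₂'.inf_eq_bot, Submodule.mem_bot] at h0
    rw [h0]; rfl
  -- ambient nondegeneracy of the pieces
  have hU₁nd : ∀ u ∈ U₁, (∀ y ∈ U₁, B u y = 0) → u = 0 := by
    intro u hu h0
    have huV₁ : u ∈ V₁ := hU₁le hu
    have hmem : u ∈ R := by
      refine hradV₁ u huV₁ ?_
      intro z hz
      rw [← hU₁supR] at hz
      obtain ⟨w, hw, y, hy, rfl⟩ := Submodule.mem_sup.1 hz
      rw [map_add, h0 y hy, horth u huV₁ w (hRV₂ hw)]
      ring
    exact Submodule.disjoint_def.1 hU₁disjR u hu hmem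
  have hU₂nd : ∀ u ∈ U₂, (∀ y ∈ U₂, B u y = 0) → u = 0 := by
    intro u hu h0
    have huV₂ : u ∈ V₂ := hU₂le hu
    have hmem : u ∈ R := by
      refine hradV₂ u huV₂ ?_
      intro z hz
      rw [← hU₂supR] at hz
      obtain ⟨w, hw, y, hy, rfl⟩ := Submodule.mem_sup.1 hz
      rw [map_add, h0 y hy, horth' u huV₂ w (hRV₁ hw)]
      ring
    exact Submodule.disjoint_def.1 hU₂disjR u hu hmem
  -- U = U₁ ⊔ U₂
  set U : Submodule ℝ V := U₁ ⊔ U₂ with hUdef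
  have hU₁U : U₁ ≤ U := le_sup_left
  have hU₂U : U₂ ≤ U := le_sup_right
  have hU₁U₂disj : Disjoint U₁ U₂ := by
    rw [Submodule.disjoint_def]
    intro x hx1 hx2
    have hxR : x ∈ R := ⟨hU₁le hx1, hU₂le hx2⟩
    exact Submodule.disjoint_def.1 hU₁disjR x hx1 hxR
  have hUnd : (B.restrict U).Nondegenerate := by
    refine (LinearMap.IsRefl.nondegenerate_iff_separatingLeft (LinearMap.BilinForm.isSymm_iff.1 (isSymm_restrict hsymm U)).isRefl).2 ?_
    intro x hx
    have hxU : (x : V) ∈ U₁ ⊔ U₂ := x.2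
    obtain ⟨u₁, hu₁, u₂, hu₂, hx12⟩ := Submodule.mem_sup.1 hxU
    have hx0 : ∀ y ∈ U, B (x : V) y = 0 := by
      intro y hy
      have := hx ⟨y, hy⟩
      simpa [LinearMap.BilinForm.restrict_apply] using this
    have hu₁0 : u₁ = 0 := by
      refine hU₁nd u₁ hu₁ ?_
      intro y hy
      have h1 : B (x : V) y = 0 := hx0 y (hU₁U hy)
      have h2 : B u₂ y = 0 := horth' u₂ (hU₂le hu₂) y (hU₁le hy)
      rw [← hx12] at h1
      rw [map_add, LinearMap.add_apply, h2, add_zero] at h1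
      exact h1
    have hu₂0 : u₂ = 0 := by
      refine hU₂nd u₂ hu₂ ?_
      intro y hy
      have h1 : B (x : V) y = 0 := hx0 y (hU₂U hy)
      have h2 : B u₁ y = 0 := horth u₁ (hU₁le hu₁) y (hU₂le hy)
      rw [← hx12] at h1
      rw [map_add, LinearMap.add_apply, h2, zero_add] at h1
      exact h1
    have : (x : V) = 0 := by rw [← hx12, hu₁0, hu₂0, add_zero]
    exact Subtype.ext this
  set W' : Submodule ℝ V := B.orthogonal U with hW'def
  have hcompl : IsCompl U W' :=
    LinearMap.BilinForm.isCompl_orthogonal_of_restrict_nondegenerate hrefl hUnd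
  have hUW' : ∀ x ∈ U, ∀ y ∈ W', B x y = 0 := by
    intro x hx y hy
    exact (LinearMap.BilinForm.mem_orthogonal_iff.1 hy) x hx
  -- first split
  have hsplit1 : bilinSignature B
      = bilinSignature (B.restrict U) + bilinSignature (B.restrict W') :=
    sig_orthsum B hsymm U W' hcompl hUW'
  -- second split: inside U
  set U₁c : Submodule ℝ ↥U := U₁.comap U.subtype with hU₁c
  set U₂c : Submodule ℝ ↥U := U₂.comap U.subtype with hU₂c
  have hcompl2 : IsCompl U₁c U₂c := by
    constructor
    · rw [disjoint_iff_inf_le]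
      intro x ⟨hx1, hx2⟩
      have : (x : V) ∈ U₁ ⊓ U₂ := ⟨hx1, hx2⟩
      rw [hU₁U₂disj.eq_bot, Submodule.mem_bot] at this
      rw [Submodule.mem_bot]
      exact Subtype.ext this
    · rw [codisjoint_iff_le_sup]
      intro x _
      obtain ⟨u₁, hu₁, u₂, hu₂, hx12⟩ := Submodule.mem_sup.1 x.2
      refine Submodule.mem_sup.2 ⟨⟨u₁, hU₁U hu₁⟩, ?_, ⟨u₂, hU₂U hu₂⟩, ?_, ?_⟩
      · rw [hU₁c, Submodule.mem_comap]; exact hu₁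
      · rw [hU₂c, Submodule.mem_comap]; exact hu₂
      · exact Subtype.ext hx12
  have h12c : ∀ x ∈ U₁c, ∀ y ∈ U₂c, (B.restrict U) x y = 0 := by
    intro x hx y hy
    simp only [LinearMap.BilinForm.restrict_apply]
    exact horth _ (hU₁le hx) _ (hU₂le hy)
  have hsplit2 : bilinSignature (B.restrict U)
      = bilinSignature ((B.restrict U).restrict U₁c)
        + bilinSignature ((B.restrict U).restrict U₂c) :=
    sig_orthsum (B.restrict U) (isSymm_restrict hsymm U) U₁c U₂c hcompl2 h12c
  have hiso₁ : bilinSignature ((B.restrict U).restrict U₁c) = bilinSignature (B.restrict U₁) := by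
    refine sig_iso _ _ (isSymm_restrict (isSymm_restrict hsymm U) U₁c)
      (Submodule.comapSubtypeEquivOfLe hU₁U) ?_
    intro x y
    rfl
  have hiso₂ : bilinSignature ((B.restrict U).restrict U₂c) = bilinSignature (B.restrict U₂) := by
    refine sig_iso _ _ (isSymm_restrict (isSymm_restrict hsymm U) U₂c)
      (Submodule.comapSubtypeEquivOfLe hU₂U) ?_
    intro x y
    rfl
  -- radical splits for V₁ and V₂
  have h12V₁ : ∀ x ∈ U₁', ∀ y ∈ R.comap V₁.subtype, (B.restrict V₁) x y = 0 := by
    intro x _ y hy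
    simp only [LinearMap.BilinForm.restrict_apply]
    exact horth _ x.2 _ (hRV₂ hy)
  have hsplitV₁ : bilinSignature (B.restrict V₁)
      = bilinSignature ((B.restrict V₁).restrict U₁')
        + bilinSignature ((B.restrict V₁).restrict (R.comap V₁.subtype)) :=
    sig_orthsum (B.restrict V₁) (isSymm_restrict hsymm V₁) U₁' (R.comap V₁.subtype)
      hU₁'.symm h12V₁
  have hz₁ : bilinSignature ((B.restrict V₁).restrict (R.comap V₁.subtype)) = 0 := by
    refine sig_zero_form _ fun x y => ?_
    simp only [LinearMap.BilinForm.restrict_apply]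
    exact horth _ (x : ↥V₁).2 _ (hRV₂ y.2)
  have hi₁ : bilinSignature ((B.restrict V₁).restrict U₁') = bilinSignature (B.restrict U₁) := by
    refine sig_iso _ _ (isSymm_restrict (isSymm_restrict hsymm V₁) U₁')
      (Submodule.equivMapOfInjective V₁.subtype (Submodule.injective_subtype V₁) U₁') ?_
    intro x y
    rfl
  have h12V₂ : ∀ x ∈ U₂', ∀ y ∈ R.comap V₂.subtype, (B.restrict V₂) x y = 0 := by
    intro x _ y hy
    simp only [LinearMap.BilinForm.restrict_apply]
    exact horth' _ x.2 _ (hRV₁ hy)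
  have hsplitV₂ : bilinSignature (B.restrict V₂)
      = bilinSignature ((B.restrict V₂).restrict U₂')
        + bilinSignature ((B.restrict V₂).restrict (R.comap V₂.subtype)) :=
    sig_orthsum (B.restrict V₂) (isSymm_restrict hsymm V₂) U₂' (R.comap V₂.subtype)
      hU₂'.symm h12V₂
  have hz₂ : bilinSignature ((B.restrict V₂).restrict (R.comap V₂.subtype)) = 0 := by
    refine sig_zero_form _ fun x y => ?_
    simp only [LinearMap.BilinForm.restrict_apply]
    exact horth' _ (x : ↥V₂).2 _ (hRV₁ y.2)
  have hi₂ : bilinSignature ((B.restrict V₂).restrict U₂') = bilinSignature (B.restrict U₂) := by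
    refine sig_iso _ _ (isSymm_restrict (isSymm_restrict hsymm V₂) U₂')
      (Submodule.equivMapOfInjective V₂.subtype (Submodule.injective_subtype V₂) U₂') ?_
    intro x y
    rfl
  -- W' is metabolic
  have hRW' : R ≤ W' := by
    intro x hx
    rw [hW'def, LinearMap.BilinForm.mem_orthogonal_iff]
    intro u hu
    obtain ⟨u₁, hu₁, u₂, hu₂, rfl⟩ := Submodule.mem_sup.1 hu
    rw [map_add, LinearMap.add_apply, horth u₁ (hU₁le hu₁) x (hRV₂ hx),
      horth' u₂ (hU₂le hu₂) x (hRV₁ hx), add_zero]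
  have hW'nd : (B.restrict W').Nondegenerate := by
    refine (LinearMap.IsRefl.nondegenerate_iff_separatingLeft (LinearMap.BilinForm.isSymm_iff.1 (isSymm_restrict hsymm W')).isRefl).2 ?_
    intro x hx
    have hx0 : ∀ z : V, B (x : V) z = 0 := by
      intro z
      have hz : z ∈ U ⊔ W' := by rw [hcompl.sup_eq_top]; trivial
      obtain ⟨u, hu, w, hw, rfl⟩ := Submodule.mem_sup.1 hz
      have h1 : B (x : V) u = 0 := by
        rw [hsymm' (x : V) u]
        exact hUW' u hu x x.2
      have h2 : B (x : V) w = 0 := by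
        have := hx ⟨w, hw⟩
        simpa [LinearMap.BilinForm.restrict_apply] using this
      rw [map_add, h1, h2, add_zero]
    exact Subtype.ext (hnd.1 _ hx0)
  set Rc : Submodule ℝ ↥W' := R.comap W'.subtype with hRc
  have hisoRc : ∀ x ∈ Rc, ∀ y ∈ Rc, (B.restrict W') x y = 0 := by
    intro x hx y hy
    simp only [LinearMap.BilinForm.restrict_apply]
    exact horth _ (hRV₁ hx) _ (hRV₂ hy)
  -- dimension count
  have hfRc : Module.finrank ℝ Rc = Module.finrank ℝ R :=
    (Submodule.comapSubtypeEquivOfLe hRW').finrank_eq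
  have hfU₁ : Module.finrank ℝ U₁ = Module.finrank ℝ U₁' :=
    ((Submodule.equivMapOfInjective V₁.subtype (Submodule.injective_subtype V₁)
      U₁').finrank_eq).symm
  have hfU₂ : Module.finrank ℝ U₂ = Module.finrank ℝ U₂' :=
    ((Submodule.equivMapOfInjective V₂.subtype (Submodule.injective_subtype V₂)
      U₂').finrank_eq).symm
  have hfRc₁ : Module.finrank ℝ (R.comap V₁.subtype) = Module.finrank ℝ R :=
    (Submodule.comapSubtypeEquivOfLe hRV₁).finrank_eq
  have hfRc₂ : Module.finrank ℝ (R.comap V₂.subtype) = Module.finrank ℝ R :=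
    (Submodule.comapSubtypeEquivOfLe hRV₂).finrank_eq
  have hf1 : Module.finrank ℝ R + Module.finrank ℝ U₁' = Module.finrank ℝ V₁ := by
    rw [← hfRc₁]; exact Submodule.finrank_add_eq_of_isCompl hU₁'
  have hf2 : Module.finrank ℝ R + Module.finrank ℝ U₂' = Module.finrank ℝ V₂ := by
    rw [← hfRc₂]; exact Submodule.finrank_add_eq_of_isCompl hU₂'
  have hfV₂ : Module.finrank ℝ V₂ = Module.finrank ℝ V - Module.finrank ℝ V₁ := by
    rw [← hperp]; exact LinearMap.BilinForm.finrank_orthogonal hnd V₁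
  have hfV₁le : Module.finrank ℝ V₁ ≤ Module.finrank ℝ V := Submodule.finrank_le V₁
  have hfU : Module.finrank ℝ U = Module.finrank ℝ U₁ + Module.finrank ℝ U₂ := by
    have h := Submodule.finrank_sup_add_finrank_inf_eq U₁ U₂
    rw [hU₁U₂disj.eq_bot, finrank_bot, add_zero] at h
    rw [hUdef, h]
  have hfW' : Module.finrank ℝ W' = Module.finrank ℝ V - Module.finrank ℝ U :=
    LinearMap.BilinForm.finrank_orthogonal hnd U
  have hfUle : Module.finrank ℝ U ≤ Module.finrank ℝ V := Submodule.finrank_le U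
  have hdim : Module.finrank ℝ ↥W' ≤ 2 * Module.finrank ℝ Rc := by
    rw [hfRc, hfW']
    omega
  have hsigW' : bilinSignature (B.restrict W') = 0 :=
    sig_metab (B.restrict W') (isSymm_restrict hsymm W') hW'nd Rc hisoRc hdim
  rw [hsplit1, hsplit2, hiso₁, hiso₂, hsigW', hsplitV₁, hz₁, hi₁, hsplitV₂, hz₂, hi₂]
  ring
end
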